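/- arXiv:1007.0902 — 2 statements merged into one kernel-verified Lean document; each statement's English description precedes it below -/
import Mathlib

section
/- Let d ≥ 3, N ≥ 1, let ℓ be a positive real with ℓ ≤ N/10, and let A ⊆ T = (Z/NZ)^d be a set of vertices such that for every x ∈ T: (1) the set A ∩ B(x,2ℓ) has a connected component of ℓ∞-diameter at least ℓ, and (2) any two connected components of A ∩ B(x,6ℓ) of ℓ∞-diameter at least ℓ are contained in the same connected component of A. Then A has exactly one connected component of ℓ∞-diameter at least ℓ. -/
open MeasureTheory Filter Classical
open scoped ENNReal NNReal

noncomputable section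

namespace Frag

/-! ### Graph-theoretic basics -/

/-- Two vertices of `Fin d → R` are adjacent if they differ in exactly one
coordinate, by `±1` (Euclidean distance one). -/
def adj {d : ℕ} {R : Type*} [AddGroupWithOne R] (x y : Fin d → R) : Prop :=
  x ≠ y ∧ ∃ i : Fin d, (y i = x i + 1 ∨ x i = y i + 1) ∧ ∀ j : Fin d, j ≠ i → x j = y j

/-- The discrete torus `(ℤ/Nℤ)^d`. -/
abbrev Torus (d N : ℕ) := Fin d → ZMod N

/-- The lattice `ℤ^d`. -/
abbrev Lat (d : ℕ) := Fin d → ℤ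

instance (n : ℕ) : MeasurableSpace (ZMod n) := ⊤

/-- The `ℓ∞`-distance on the torus. -/
def torusDist {d N : ℕ} (x y : Torus d N) : ℕ :=
  Finset.univ.sup fun i : Fin d => min (x i - y i).val (y i - x i).val

/-- The `ℓ∞`-distance on the lattice. -/
def latDist {d : ℕ} (x y : Lat d) : ℕ :=
  Finset.univ.sup fun i : Fin d => (x i - y i).natAbs

/-- Closed `ℓ∞`-ball in the torus. -/
def torusBall {d N : ℕ} (x : Torus d N) (r : ℝ) : Set (Torus d N) :=
  {y | (torusDist x y : ℝ) ≤ r}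

/-- Closed `ℓ∞`-ball in the lattice. -/
def latBall {d : ℕ} (x : Lat d) (r : ℝ) : Set (Lat d) :=
  {y | (latDist x y : ℝ) ≤ r}

/-- `x` and `y` are connected by a nearest-neighbour path staying in `S`. -/
def connectedIn {α : Type*} (rel : α → α → Prop) (S : Set α) (x y : α) : Prop :=
  ∃ (n : ℕ) (p : ℕ → α), p 0 = x ∧ p n = y ∧ (∀ k, k ≤ n → p k ∈ S) ∧
    ∀ k, k < n → rel (p k) (p (k + 1))

/-- The connected component of `x` inside `S`. -/
def compOf {α : Type*} (rel : α → α → Prop) (S : Set α) (x : α) : Set α :=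
  {y | connectedIn rel S x y}

/-- `S` is a connected set. -/
def IsConnSet {α : Type*} (rel : α → α → Prop) (S : Set α) : Prop :=
  ∀ x ∈ S, ∀ y ∈ S, connectedIn rel S x y

/-- External vertex boundary. -/
def extBdry {α : Type*} (rel : α → α → Prop) (S : Set α) : Set α :=
  {y | y ∉ S ∧ ∃ x ∈ S, rel x y}

/-- Internal vertex boundary. -/
def intBdry {α : Type*} (rel : α → α → Prop) (S : Set α) : Set α :=
  {x | x ∈ S ∧ ∃ y, y ∉ S ∧ rel x y}

/-- The cardinality of the largest connected component of `S`. -/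
def maxCompSize {α : Type*} (rel : α → α → Prop) (S : Set α) : ℕ :=
  sSup {n | ∃ x ∈ S, n = (compOf rel S x).ncard}

/-- The diameter of a set with respect to a distance. -/
def diamOf {α : Type*} (dist : α → α → ℕ) (S : Set α) : ℕ :=
  sSup {n | ∃ x ∈ S, ∃ y ∈ S, n = dist x y}

/-- The canonical graph isomorphism `φ` from `B(0, N/4) ⊆ (ℤ/Nℤ)^d` onto
`B(0, N/4) ⊆ ℤ^d`, given by the signed representative of each coordinate. -/
def torusToLat {d N : ℕ} (x : Torus d N) : Lat d :=
  fun i => if ((x i).val : ℝ) ≤ (N : ℝ) / 2 then ((x i).val : ℤ) else ((x i).val : ℤ) - (N : ℤ)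

/-! ### Discrete-time simple random walk -/

/-- One-step transition probability of the simple random walk. -/
def srwStep {d : ℕ} {R : Type*} [AddGroupWithOne R] (x y : Fin d → R) : ℝ≥0∞ :=
  if adj x y then ((2 * d : ℕ) : ℝ≥0∞)⁻¹ else 0

/-- `μ` is the law on path space of the discrete-time simple random walk with
initial distribution `init`, characterized by its cylinder probabilities. -/
def IsWalkLaw {d : ℕ} {R : Type*} [AddGroupWithOne R] [MeasurableSpace R]
    (μ : Measure (ℕ → (Fin d → R))) (init : (Fin d → R) → ℝ≥0∞) : Prop :=
  IsProbabilityMeasure μ ∧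
  ∀ (n : ℕ) (w : ℕ → (Fin d → R)),
    μ {ω | ∀ k, k ≤ n → ω k = w k} =
      init (w 0) * ∏ k ∈ Finset.range n, srwStep (w k) (w (k + 1))

/-- The uniform initial distribution on the torus. -/
def unifInit (d N : ℕ) : Torus d N → ℝ≥0∞ := fun _ => ((N : ℝ≥0∞) ^ d)⁻¹

/-- The initial distribution concentrated at `x`. -/
def pointInit {α : Type*} (x : α) : α → ℝ≥0∞ := fun y => if y = x then 1 else 0

/-- The set of sites visited in the first `t` steps. -/
def visited {α : Type*} (t : ℕ) (ω : ℕ → α) : Set α := {v | ∃ k, k ≤ t ∧ ω k = v}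

/-! ### Capacity and random interlacements on `ℤ^d` -/

/-- The event that the walk never returns to `V` after time `0`. -/
def escEvent {d : ℕ} (V : Set (Lat d)) : Set (ℕ → Lat d) :=
  {w | ∀ n, 1 ≤ n → w n ∉ V}

/-- `r` is the (simple random walk) capacity of `V ⊆ ℤ^d`:
`r = Σ_{x ∈ V} P_x[H̃_V = ∞]`. -/
def IsCap (d : ℕ) (V : Set (Lat d)) (r : ℝ) : Prop :=
  ∃ μ : Lat d → Measure (ℕ → Lat d),
    (∀ x, IsWalkLaw (μ x) (pointInit x)) ∧
    r = ∑ᶠ x ∈ V, ((μ x) (escEvent V)).toReal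

/-- `I` is a random interlacement at level `u` on the probability space `(Ω, P)`:
for every finite `V ⊆ ℤ^d`, `P[I ∩ V = ∅] = exp (−u · cap V)`. -/
def IsInterlacement (d : ℕ) (u : ℝ) {Ω : Type*} [MeasurableSpace Ω]
    (P : Measure Ω) (I : Ω → Set (Lat d)) : Prop :=
  IsProbabilityMeasure P ∧
  (∀ x : Lat d, MeasurableSet {ω | x ∈ I ω}) ∧
  ∀ V : Set (Lat d), V.Finite → ∀ r : ℝ, IsCap d V r →
    P {ω | ∀ x ∈ V, x ∉ I ω} = ENNReal.ofReal (Real.exp (-u * r))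

/-- `e = η(u)`, the probability that the origin lies in an infinite component of
the vacant set `V^u = ℤ^d ∖ I^u` of a random interlacement at level `u`. -/
def IsEta (d : ℕ) (u e : ℝ) : Prop :=
  ∃ (Ω : Type) (_ : MeasurableSpace Ω) (P : Measure Ω) (I : Ω → Set (Lat d)),
    IsInterlacement d u P I ∧
    e = (P {ω | (compOf adj ((I ω)ᶜ) (0 : Lat d)).Infinite}).toReal

/-- The critical level `u_* = inf {u ≥ 0 : η(u) = 0}`. -/
def uStar (d : ℕ) : ℝ := sInf {u | 0 ≤ u ∧ IsEta d u 0}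

/-- The probability of an event `E` about a random interlacement at level `u`. -/
def intProb (d : ℕ) (u : ℝ) (E : Set (Lat d) → Prop) : ℝ :=
  sSup {p | ∃ (Ω : Type) (_ : MeasurableSpace Ω) (P : Measure Ω) (I : Ω → Set (Lat d)),
    IsInterlacement d u P I ∧ p = (P {ω | E (I ω)}).toReal}

/-- The event that `B(0,L)` is connected to the external boundary of `B(0,2L)`
by a nearest-neighbour path in `S`. -/
def connAcross (d L : ℕ) (S : Set (Lat d)) : Prop :=
  ∃ x ∈ latBall (0 : Lat d) (L : ℝ), ∃ y ∈ extBdry adj (latBall (0 : Lat d) (2 * (L : ℝ))),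
    connectedIn adj S x y

/-- The critical level `u_** = inf {u ≥ 0 : α(u) > 0}`. -/
def uStarStar (d : ℕ) : ℝ :=
  sInf {u | 0 ≤ u ∧ ∃ a : ℝ, 0 < a ∧
    Tendsto (fun L : ℕ => (L : ℝ) ^ a * intProb d u fun I => connAcross d L Iᶜ)
      atTop (nhds 0)}

/-- `u` is a strongly supercritical level for random interlacements on `ℤ^d`. -/
def StronglySupercritical (d : ℕ) (u : ℝ) : Prop :=
  ∃ μ : ℝ, 0 < μ ∧
  ∃ (Ω : Type) (_ : MeasurableSpace Ω) (P : Measure Ω) (I : ℝ → Ω → Set (Lat d)),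
    (∀ v : ℝ, 0 ≤ v → IsInterlacement d v P (I v)) ∧
    (∀ v v' : ℝ, v ≤ v' → ∀ ω, I v ω ⊆ I v' ω) ∧
    ∃ N₀ : ℕ, ∀ N : ℕ, N₀ ≤ N →
      (1 - Real.exp (-(N : ℝ) ^ μ) ≤
        (P {ω | ∃ x ∈ latBall (0 : Lat d) (N : ℝ),
          (compOf adj ((I (u * (1 + μ)) ω)ᶜ) x).Infinite}).toReal) ∧
      (1 - Real.exp (-(N : ℝ) ^ μ) ≤
        (P {ω | ∀ S₁ S₂ : Set (Lat d),
            S₁ ⊆ (I (u * (1 - μ)) ω)ᶜ ∩ latBall 0 (N : ℝ) →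
            S₂ ⊆ (I (u * (1 - μ)) ω)ᶜ ∩ latBall 0 (N : ℝ) →
            IsConnSet adj S₁ → IsConnSet adj S₂ →
            (N : ℝ) / 8 ≤ (diamOf latDist S₁ : ℝ) →
            (N : ℝ) / 8 ≤ (diamOf latDist S₂ : ℝ) →
            ∃ x ∈ S₁, ∃ y ∈ S₂,
              connectedIn adj ((I (u * (1 + μ)) ω)ᶜ ∩ latBall 0 (2 * (N : ℝ))) x y}).toReal)

/-! ### Continuous-time walk -/

/-- Sample space for the continuous-time walk: a discrete path together with
the i.i.d. exponential interarrival gaps of the driving Poisson process. -/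
abbrev CTPath (d N : ℕ) := (ℕ → Torus d N) × (ℕ → ℝ)

/-- The number of jumps performed up to time `t`. -/
def nJumps (g : ℕ → ℝ) (t : ℝ) : ℕ := sSup {n | ∑ k ∈ Finset.range n, g k ≤ t}

/-- The position of the continuous-time walk at time `t`. -/
def ctPos {d N : ℕ} (ω : CTPath d N) (t : ℝ) : Torus d N := ω.1 (nJumps ω.2 t)

/-- `ν` is the law of an i.i.d. sequence of exponential random variables of
parameter `1`, characterized by its joint survival function. -/
def IsIIDExp (ν : Measure (ℕ → ℝ)) : Prop :=
  IsProbabilityMeasure ν ∧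
  ∀ (n : ℕ) (s : ℕ → ℝ), (∀ k, 0 ≤ s k) →
    ν {g | ∀ k, k ≤ n → s k < g k} =
      ENNReal.ofReal (Real.exp (-(∑ k ∈ Finset.range (n + 1), s k)))

/-- `P` is the law of the continuous-time simple random walk `Y_t = X_{N_t}`
with initial distribution `init`. -/
def IsCTWalk {d N : ℕ} (P : Measure (CTPath d N)) (init : Torus d N → ℝ≥0∞) : Prop :=
  ∃ (μ : Measure (ℕ → Torus d N)) (ν : Measure (ℕ → ℝ)),
    IsWalkLaw μ init ∧ IsIIDExp ν ∧ P = μ.prod ν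

/-- The entrance time `H_V = inf {t ≥ 0 : Y_t ∈ V}`. -/
def hitT {d N : ℕ} (V : Set (Torus d N)) (ω : CTPath d N) : ℝ :=
  sInf {t | 0 ≤ t ∧ ctPos ω t ∈ V}

/-- The entrance time to `V` after time `s`. -/
def hitTAfter {d N : ℕ} (V : Set (Torus d N)) (ω : CTPath d N) (s : ℝ) : ℝ :=
  sInf {t | s ≤ t ∧ ctPos ω t ∈ V}

/-- The exit time `T_V = inf {t ≥ 0 : Y_t ∉ V}`. -/
def exitT {d N : ℕ} (V : Set (Torus d N)) (ω : CTPath d N) : ℝ :=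
  sInf {t | 0 ≤ t ∧ ctPos ω t ∉ V}

/-- The regeneration time `t_* = (N log N)^2`. -/
def tstar (N : ℕ) : ℝ := ((N : ℝ) * Real.log N) ^ 2

/-- The first time `t ≥ s + t_*` such that the walk has avoided `B` during the
whole interval `[t − t_*, t]`. -/
def uEndAfter {d N : ℕ} (B : Set (Torus d N)) (ω : CTPath d N) (s : ℝ) : ℝ :=
  sInf {t | s + tstar N ≤ t ∧ ∀ r, t - tstar N ≤ r → r ≤ t → ctPos ω r ∉ B}

/-- The successive excursion times `(R_k, U_k)` between `A` and (long absences
from) `B`, with the convention `(R_0, U_0) = (0, 0)`. -/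
def excTimes {d N : ℕ} (A B : Set (Torus d N)) (ω : CTPath d N) : ℕ → ℝ × ℝ
  | 0 => (0, 0)
  | k + 1 =>
      let R := hitTAfter A ω (excTimes A B ω k).2
      (R, uEndAfter B ω R)

/-- The range of the continuous-time walk during the time interval `[a, b]`. -/
def ctRange {d N : ℕ} (ω : CTPath d N) (a b : ℝ) : Set (Torus d N) :=
  {v | ∃ t, a ≤ t ∧ t ≤ b ∧ ctPos ω t = v}

/-! ### The killed walk and the quasistationary distribution -/

/-- The action of the substochastic matrix `P^B` (walk killed on `B`) on a
vector `v`. -/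
def killedMul (d N : ℕ) (B : Set (Torus d N)) (v : Torus d N → ℝ) (x : Torus d N) : ℝ :=
  ∑ᶠ y : Torus d N, if y ∉ B ∧ adj x y then v y / (2 * d) else 0

/-- `l` is an eigenvalue of the killed transition matrix `P^B`. -/
def IsKilledEigenvalue (d N : ℕ) (B : Set (Torus d N)) (l : ℝ) : Prop :=
  ∃ v : Torus d N → ℝ, v ≠ 0 ∧ (∀ x ∈ B, v x = 0) ∧
    ∀ x, x ∉ B → killedMul d N B v x = l * v x

/-- `σ` is the quasistationary distribution on `T ∖ B`: the normalized
non-negative principal (Perron–Frobenius) eigenvector of `P^B`. -/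
def IsQSD (d N : ℕ) (B : Set (Torus d N)) (σ : Torus d N → ℝ) : Prop :=
  (∀ x, 0 ≤ σ x) ∧ (∀ x ∈ B, σ x = 0) ∧ (∑ᶠ x, σ x = 1) ∧
  ∃ l : ℝ, (∀ x, x ∉ B → killedMul d N B σ x = l * σ x) ∧
    ∀ l', IsKilledEigenvalue d N B l' → l' ≤ l

/-- The Dirichlet form of the simple random walk on the torus. -/
def dirichlet (d N : ℕ) (g : Torus d N → ℝ) : ℝ :=
  (1 / 2) * ∑ᶠ x : Torus d N, ∑ᶠ y : Torus d N,
    if adj x y then (g x - g y) ^ 2 / (2 * d * (N : ℝ) ^ d) else 0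

end Frag

namespace Frag

/-! #### Auxiliary lemmas for `unique_big_component` -/

section UBCAux

lemma adj_symm' {d N : ℕ} {x y : Fin d → ZMod N} (h : adj x y) : adj y x :=
  ⟨h.1.symm, h.2.imp fun i hi => ⟨hi.1.symm, fun j hj => (hi.2 j hj).symm⟩⟩

lemma connectedIn.refl {α : Type*} {rel : α → α → Prop} {S : Set α} {x : α} (hx : x ∈ S) :
    connectedIn rel S x x :=
  ⟨0, fun _ => x, rfl, rfl, fun _ _ => hx, fun k hk => absurd hk (Nat.not_lt_zero k)⟩

lemma connectedIn.mono {α : Type*} {rel : α → α → Prop} {S T : Set α} (hST : S ⊆ T) {x y : α}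
    (h : connectedIn rel S x y) : connectedIn rel T x y := by
  obtain ⟨n, p, h0, hn, hmem, hadj⟩ := h
  exact ⟨n, p, h0, hn, fun k hk => hST (hmem k hk), hadj⟩

lemma connectedIn.symm {α : Type*} {rel : α → α → Prop} (hrel : ∀ a b, rel a b → rel b a)
    {S : Set α} {x y : α} (h : connectedIn rel S x y) : connectedIn rel S y x := by
  obtain ⟨n, p, h0, hn, hmem, hadj⟩ := h
  refine ⟨n, fun k => p (n - k), by simp [hn], by simp [h0], fun k _ => hmem _ (by omega), ?_⟩
  intro k hk
  show rel (p (n - k)) (p (n - (k + 1)))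
  have h1 : n - k = (n - (k + 1)) + 1 := by omega
  have h2 := hadj (n - (k + 1)) (by omega)
  rw [h1]
  exact hrel _ _ h2

lemma connectedIn.trans {α : Type*} {rel : α → α → Prop} {S : Set α} {x y z : α}
    (h1 : connectedIn rel S x y) (h2 : connectedIn rel S y z) :
    connectedIn rel S x z := by
  obtain ⟨n, p, hp0, hpn, hpS, hpadj⟩ := h1
  obtain ⟨m, q, hq0, hqm, hqS, hqadj⟩ := h2
  refine ⟨n + m, fun k => if k ≤ n then p k else q (k - n), by simp [hp0], ?_, ?_, ?_⟩
  · show (if n + m ≤ n then p (n + m) else q (n + m - n)) = z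
    by_cases hm : m = 0
    · subst hm
      simp only [Nat.add_zero, le_refl, if_pos]
      exact hpn.trans (hq0.symm.trans hqm)
    · rw [if_neg (by omega), show n + m - n = m by omega]
      exact hqm
  · intro k hk
    show (if k ≤ n then p k else q (k - n)) ∈ S
    by_cases h : k ≤ n
    · rw [if_pos h]; exact hpS k h
    · rw [if_neg h]; exact hqS (k - n) (by omega)
  · intro k hk
    show rel (if k ≤ n then p k else q (k - n)) (if k + 1 ≤ n then p (k + 1) else q (k + 1 - n))
    by_cases hlt : k < n
    · rw [if_pos (by omega), if_pos (by omega)]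
      exact hpadj k hlt
    · by_cases heq : k = n
      · rw [if_pos (by omega), if_neg (by omega), show k + 1 - n = 1 by omega, heq, hpn, ← hq0]
        exact hqadj 0 (by omega)
      · rw [if_neg (by omega), if_neg (by omega), show k + 1 - n = (k - n) + 1 by omega]
        exact hqadj (k - n) (by omega)

lemma mem_compOf_self {α : Type*} {rel : α → α → Prop} {S : Set α} {x : α} (hx : x ∈ S) :
    x ∈ compOf rel S x :=
  connectedIn.refl hx

lemma compOf_mono {α : Type*} {rel : α → α → Prop} {S T : Set α} (h : S ⊆ T) (x : α) :
    compOf rel S x ⊆ compOf rel T x := fun _ hy => connectedIn.mono h hy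

lemma compOf_subset {α : Type*} {rel : α → α → Prop} {S : Set α} (x : α) :
    compOf rel S x ⊆ S := by
  rintro y ⟨n, p, _, hn, hS, _⟩
  exact hn ▸ hS n le_rfl

lemma compOf_eq_of_conn {α : Type*} {rel : α → α → Prop} (hrel : ∀ a b, rel a b → rel b a)
    {S : Set α} {x y : α} (h : connectedIn rel S x y) : compOf rel S x = compOf rel S y := by
  ext z
  constructor
  · intro hz; exact (connectedIn.symm hrel h).trans hz
  · intro hz; exact h.trans hz

lemma zval_neg_cases {N : ℕ} [NeZero N] (a : ZMod N) :
    a.val + (-a).val = 0 ∨ a.val + (-a).val = N := by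
  rcases eq_or_ne a 0 with h | h
  · subst h; simp
  · right
    rw [ZMod.neg_val, if_neg h]
    have h1 : a.val < N := ZMod.val_lt a
    have h2 : a.val ≠ 0 := fun hh => h ((ZMod.val_eq_zero a).mp hh)
    omega

lemma mod_two_cases {x N : ℕ} (hN : 0 < N) (h : x < 2 * N) : x % N = x ∨ x % N + N = x := by
  rcases Nat.lt_or_ge x N with h1 | h1
  · left; exact Nat.mod_eq_of_lt h1
  · right; rw [Nat.mod_eq_sub_mod h1, Nat.mod_eq_of_lt (by omega)]; omega

lemma zf_triangle {N : ℕ} [NeZero N] (a b : ZMod N) :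
    min (a + b).val (-(a + b)).val ≤ min a.val (-a).val + min b.val (-b).val := by
  have hN : 0 < N := Nat.pos_of_ne_zero (NeZero.ne N)
  have hab : (a + b).val = (a.val + b.val) % N := ZMod.val_add a b
  have hab' : (-(a + b)).val = ((-a).val + (-b).val) % N := by
    rw [neg_add]; exact ZMod.val_add _ _
  have hva : a.val < N := ZMod.val_lt a
  have hvb : b.val < N := ZMod.val_lt b
  have hva' : (-a).val < N := ZMod.val_lt _
  have hvb' : (-b).val < N := ZMod.val_lt _
  have h1 := mod_two_cases hN (show a.val + b.val < 2 * N by omega)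
  have h2 := mod_two_cases hN (show (-a).val + (-b).val < 2 * N by omega)
  have ha := zval_neg_cases a
  have hb := zval_neg_cases b
  have hs := zval_neg_cases (a + b)
  rw [hab, hab'] at *
  omega

lemma torusDist_triangle {d N : ℕ} [NeZero N] (x y z : Torus d N) :
    torusDist x z ≤ torusDist x y + torusDist y z := by
  apply Finset.sup_le
  intro i _
  have h1 : x i - z i = (x i - y i) + (y i - z i) := by ring
  have h2 : z i - x i = -((x i - y i) + (y i - z i)) := by ring
  rw [h1, h2]
  refine le_trans (zf_triangle (x i - y i) (y i - z i)) (Nat.add_le_add ?_ ?_)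
  · rw [neg_sub]
    exact Finset.le_sup (f := fun i : Fin d => min (x i - y i).val (y i - x i).val)
      (Finset.mem_univ i)
  · rw [neg_sub]
    exact Finset.le_sup (f := fun i : Fin d => min (y i - z i).val (z i - y i).val)
      (Finset.mem_univ i)

lemma torusDist_self {d N : ℕ} (x : Torus d N) : torusDist x x = 0 :=
  le_antisymm (Finset.sup_le fun i _ => by simp [sub_self]) (Nat.zero_le _)

lemma torusDist_le_N {d N : ℕ} [NeZero N] (x y : Torus d N) : torusDist x y ≤ N :=
  Finset.sup_le fun i _ => le_of_lt (lt_of_le_of_lt (min_le_left _ _) (ZMod.val_lt _))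

lemma torusDist_eq_zero {d N : ℕ} [NeZero N] {x y : Torus d N} (h : torusDist x y = 0) :
    x = y := by
  funext i
  have hi : min (x i - y i).val ((y i - x i)).val = 0 :=
    Nat.le_zero.mp (h ▸ Finset.le_sup (f := fun i : Fin d => min (x i - y i).val (y i - x i).val)
      (Finset.mem_univ i))
  rcases Nat.min_eq_zero_iff.mp hi with h0 | h0
  · exact sub_eq_zero.mp ((ZMod.val_eq_zero _).mp h0)
  · exact (sub_eq_zero.mp ((ZMod.val_eq_zero _).mp h0)).symm

lemma torusDist_adj {d N : ℕ} [NeZero N] (hN1 : 1 < N) {x y : Torus d N} (h : adj x y) :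
    torusDist x y ≤ 1 := by
  obtain ⟨_, i, hi, hoth⟩ := h
  apply Finset.sup_le
  intro j _
  by_cases hj : j = i
  · subst hj
    have hone : (1 : ZMod N).val = 1 := by rw [ZMod.val_one_eq_one_mod]; exact Nat.mod_eq_of_lt hN1
    rcases hi with h1 | h1
    · have he : y j - x j = 1 := by rw [h1]; ring
      rw [he, hone]
      exact min_le_right _ _
    · have he : x j - y j = 1 := by rw [h1]; ring
      rw [he, hone]
      exact min_le_left _ _
  · rw [hoth j hj]
    simp [sub_self]

lemma diam_set_bddAbove {d N : ℕ} [NeZero N] (S : Set (Torus d N)) :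
    BddAbove {n | ∃ x ∈ S, ∃ y ∈ S, n = torusDist x y} := by
  refine ⟨N, ?_⟩
  rintro n ⟨x, _, y, _, hn⟩
  exact hn ▸ torusDist_le_N x y

lemma le_diamOf {d N : ℕ} [NeZero N] {S : Set (Torus d N)} {x y : Torus d N}
    (hx : x ∈ S) (hy : y ∈ S) : torusDist x y ≤ diamOf torusDist S :=
  le_csSup (diam_set_bddAbove S) ⟨x, hx, y, hy, rfl⟩

lemma diamOf_mono {d N : ℕ} [NeZero N] {S T : Set (Torus d N)} (hST : S ⊆ T)
    (hS : S.Nonempty) : diamOf torusDist S ≤ diamOf torusDist T := by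
  obtain ⟨x, hx⟩ := hS
  refine csSup_le_csSup (diam_set_bddAbove T) ⟨torusDist x x, x, hx, x, hx, rfl⟩ ?_
  rintro n ⟨a, ha, b, hb, hn⟩
  exact ⟨a, hST ha, b, hST hb, hn⟩

lemma exists_diam_realizer {d N : ℕ} [NeZero N] {S : Set (Torus d N)} (hS : S.Nonempty) :
    ∃ x ∈ S, ∃ y ∈ S, torusDist x y = diamOf torusDist S := by
  obtain ⟨x, hx⟩ := hS
  have hmem := Nat.sSup_mem (⟨torusDist x x, x, hx, x, hx, rfl⟩ :
    {n | ∃ x ∈ S, ∃ y ∈ S, n = torusDist x y}.Nonempty) (diam_set_bddAbove S)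
  obtain ⟨a, ha, b, hb, hab⟩ := hmem
  exact ⟨a, ha, b, hb, hab.symm⟩

end UBCAux

/-- **Lemma (local criterion for a unique large component).**
Let `ℓ ≤ N/10` and `A ⊆ T` be such that for every `x ∈ T`: (1) `A ∩ B(x,2ℓ)`
has a connected component of diameter at least `ℓ`, and (2) any two connected
components of `A ∩ B(x,6ℓ)` of diameter at least `ℓ` lie in the same component
of `A`.  Then `A` has exactly one connected component of diameter `≥ ℓ`. -/
theorem unique_big_component
    (d N : ℕ) (hd : 3 ≤ d) (hN : 1 ≤ N)
    (ℓ : ℝ) (hℓ : 0 < ℓ) (hℓN : ℓ ≤ (N : ℝ) / 10)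
    (A : Set (Torus d N))
    (h1 : ∀ x : Torus d N, ∃ y ∈ A ∩ torusBall x (2 * ℓ),
        ℓ ≤ (diamOf torusDist (compOf adj (A ∩ torusBall x (2 * ℓ)) y) : ℝ))
    (h2 : ∀ x : Torus d N, ∀ y ∈ A ∩ torusBall x (6 * ℓ), ∀ z ∈ A ∩ torusBall x (6 * ℓ),
        ℓ ≤ (diamOf torusDist (compOf adj (A ∩ torusBall x (6 * ℓ)) y) : ℝ) →
        ℓ ≤ (diamOf torusDist (compOf adj (A ∩ torusBall x (6 * ℓ)) z) : ℝ) →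
        connectedIn adj A y z) :
    ∃! C : Set (Torus d N),
      (∃ x ∈ A, C = compOf adj A x) ∧ ℓ ≤ (diamOf torusDist C : ℝ) := by
  haveI : NeZero N := ⟨by omega⟩
  classical
  choose F hF1 hF2 using h1
  -- Step 0: derive `1 ≤ 2ℓ` (otherwise the `2ℓ`-balls are singletons) and `1 < N`.
  have hhalf : (1 : ℝ) ≤ 2 * ℓ := by
    by_contra hc
    push_neg at hc
    set x0 : Torus d N := fun _ => 0 with hx0
    have hsub : A ∩ torusBall x0 (2 * ℓ) ⊆ {x0} := by
      rintro z ⟨-, hz⟩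
      have hz' : (torusDist x0 z : ℝ) ≤ 2 * ℓ := hz
      have h0 : torusDist x0 z = 0 := by
        by_contra h0
        have h1 : (1 : ℝ) ≤ (torusDist x0 z : ℝ) := by
          exact_mod_cast Nat.one_le_iff_ne_zero.mpr h0
        linarith
      exact (torusDist_eq_zero h0).symm
    have hcomp : compOf adj (A ∩ torusBall x0 (2 * ℓ)) (F x0) ⊆ {x0} :=
      (compOf_subset _).trans hsub
    have hzero : diamOf torusDist (compOf adj (A ∩ torusBall x0 (2 * ℓ)) (F x0)) = 0 := by
      apply Nat.le_zero.mp
      refine csSup_le ?_ ?_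
      · exact ⟨torusDist (F x0) (F x0), F x0, mem_compOf_self (hF1 x0), F x0,
          mem_compOf_self (hF1 x0), rfl⟩
      rintro n ⟨a, ha, b, hb, hn⟩
      have : a = x0 := hcomp ha
      have hb' : b = x0 := hcomp hb
      rw [hn, this, hb', torusDist_self]
    have := hF2 x0
    rw [hzero] at this
    simp at this
    linarith
  have hN1 : 1 < N := by
    have h5 : (5 : ℝ) ≤ (N : ℝ) := by linarith
    exact_mod_cast show (1 : ℝ) < (N : ℝ) by linarith
  have ball_mono : ∀ (x : Torus d N) (r r' : ℝ), r ≤ r' → torusBall x r ⊆ torusBall x r' :=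
    fun x r r' h z hz => le_trans hz h
  -- Step 1 (claim *): nearby centres have `A`-connected anchors.
  have claimStar : ∀ x x' : Torus d N, torusDist x x' ≤ 1 →
      connectedIn adj A (F x) (F x') := by
    intro x x' hxx'
    have h26 : torusBall x (2 * ℓ) ⊆ torusBall x (6 * ℓ) := ball_mono x _ _ (by linarith)
    have h26' : torusBall x' (2 * ℓ) ⊆ torusBall x (6 * ℓ) := by
      intro v hv
      have hv1 : (torusDist x' v : ℝ) ≤ 2 * ℓ := hv
      have hv2 : (torusDist x v : ℝ) ≤ (torusDist x x' : ℝ) + (torusDist x' v : ℝ) := by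
        exact_mod_cast torusDist_triangle x x' v
      have hv3 : (torusDist x x' : ℝ) ≤ 1 := by exact_mod_cast hxx'
      show (torusDist x v : ℝ) ≤ 6 * ℓ
      linarith
    refine h2 x (F x) ⟨(hF1 x).1, h26 (hF1 x).2⟩ (F x') ⟨(hF1 x').1, h26' (hF1 x').2⟩ ?_ ?_
    · refine le_trans (hF2 x) (Nat.cast_le.mpr ?_)
      exact diamOf_mono (compOf_mono (Set.inter_subset_inter_right A h26) _)
        ⟨F x, mem_compOf_self (hF1 x)⟩
    · refine le_trans (hF2 x') (Nat.cast_le.mpr ?_)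
      exact diamOf_mono (compOf_mono (Set.inter_subset_inter_right A h26') _)
        ⟨F x', mem_compOf_self (hF1 x')⟩
  -- Step 2: chaining anchors across the whole torus.
  have unit : ∀ (z : Torus d N) (i : Fin d),
      torusDist z (Function.update z i (z i + 1)) ≤ 1 := by
    intro z i
    apply Finset.sup_le
    intro j _
    by_cases hj : j = i
    · subst hj
      rw [Function.update_self]
      have hone : (1 : ZMod N).val = 1 := by
        rw [ZMod.val_one_eq_one_mod]; exact Nat.mod_eq_of_lt hN1
      have he : (z j + 1) - z j = 1 := by ring
      rw [he, hone]
      exact min_le_right _ _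
    · rw [Function.update_of_ne hj]
      simp [sub_self]
  have chain1 : ∀ (x : Torus d N) (i : Fin d) (n : ℕ),
      connectedIn adj A (F x) (F (Function.update x i (x i + (n : ZMod N)))) := by
    intro x i n
    induction n with
    | zero =>
        have he : Function.update x i (x i + ((0 : ℕ) : ZMod N)) = x := by simp
        rw [he]
        exact connectedIn.refl (hF1 x).1
    | succ n ih =>
        have he : Function.update (Function.update x i (x i + (n : ZMod N))) i
            ((Function.update x i (x i + (n : ZMod N))) i + 1) =
            Function.update x i (x i + ((n + 1 : ℕ) : ZMod N)) := by
          rw [Function.update_self, Function.update_idem]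
          congr 1
          push_cast
          ring
        have hstep := claimStar _ _ (unit (Function.update x i (x i + (n : ZMod N))) i)
        rw [he] at hstep
        exact ih.trans hstep
  have chain2 : ∀ (x : Torus d N) (i : Fin d) (c : ZMod N),
      connectedIn adj A (F x) (F (Function.update x i c)) := by
    intro x i c
    have h := chain1 x i (c - x i).val
    have he : x i + (((c - x i).val : ℕ) : ZMod N) = c := by
      rw [ZMod.natCast_val, ZMod.cast_id]
      ring
    rwa [he] at h
  have chain3 : ∀ (s : Finset (Fin d)) (x x' : Torus d N), (∀ j, j ∉ s → x j = x' j) →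
      connectedIn adj A (F x) (F x') := by
    intro s
    induction s using Finset.induction_on with
    | empty =>
        intro x x' h
        have : x = x' := funext fun j => h j (Finset.notMem_empty j)
        rw [this]
        exact connectedIn.refl (hF1 x').1
    | @insert a s ha ih =>
        intro x x' h
        have step1 := chain2 x a (x' a)
        have step2 : connectedIn adj A (F (Function.update x a (x' a))) (F x') := by
          apply ih
          intro j hj
          by_cases hja : j = a
          · subst hja; rw [Function.update_self]
          · rw [Function.update_of_ne hja]
            exact h j (by simp [Finset.mem_insert, hja, hj])
        exact step1.trans step2
  have chainAll : ∀ x x' : Torus d N, connectedIn adj A (F x) (F x') := fun x x' =>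
    chain3 Finset.univ x x' (fun j hj => absurd (Finset.mem_univ j) hj)
  -- Step 3 (claim **): a point of a big component of `A` is `A`-connected to its anchor.
  have claimSS : ∀ y ∈ A, ℓ ≤ (diamOf torusDist (compOf adj A y) : ℝ) →
      connectedIn adj A y (F y) := by
    intro y hyA hydiam
    have hyB6 : y ∈ A ∩ torusBall y (6 * ℓ) := by
      refine ⟨hyA, ?_⟩
      show (torusDist y y : ℝ) ≤ 6 * ℓ
      rw [torusDist_self]
      push_cast
      linarith
    have key : ℓ ≤ (diamOf torusDist (compOf adj (A ∩ torusBall y (6 * ℓ)) y) : ℝ) := by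
      set L := ⌈ℓ⌉₊ with hLdef
      have hL1 : 1 ≤ L := Nat.one_le_ceil_iff.mpr hℓ
      have hLle : (L : ℝ) ≤ 6 * ℓ := by
        have := Nat.ceil_lt_add_one (le_of_lt hℓ)
        linarith
      have main : ∀ c ∈ compOf adj A y,
          (∃ c' ∈ compOf adj (A ∩ torusBall y (6 * ℓ)) y, L ≤ torusDist y c') ∨
          c ∈ compOf adj (A ∩ torusBall y (6 * ℓ)) y := by
        rintro c ⟨n, p, hp0, hpn, hpA, hpadj⟩
        by_cases hex : ∃ k, k ≤ n ∧ L ≤ torusDist y (p k)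
        · left
          have hk0 := Nat.find_spec hex
          have hmin : ∀ j, j < Nat.find hex → ¬(j ≤ n ∧ L ≤ torusDist y (p j)) :=
            fun j hj => Nat.find_min hex hj
          set k0 := Nat.find hex with hk0def
          have hbnd : ∀ j, j ≤ k0 → torusDist y (p j) ≤ L := by
            intro j hj
            rcases Nat.eq_zero_or_pos j with h0 | h0
            · subst h0
              rw [hp0, torusDist_self]
              omega
            · have hj1 : j - 1 < k0 := by omega
              have hprev : torusDist y (p (j - 1)) < L := by
                have hh := hmin (j - 1) hj1
                push_neg at hh
                exact hh (by omega)
              have hadjj : adj (p (j - 1)) (p j) := by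
                have hh := hpadj (j - 1) (by omega)
                rwa [show j - 1 + 1 = j by omega] at hh
              have ht := torusDist_triangle y (p (j - 1)) (p j)
              have ha := torusDist_adj hN1 hadjj
              omega
          have hmem6 : ∀ j, j ≤ k0 → p j ∈ A ∩ torusBall y (6 * ℓ) := by
            intro j hj
            refine ⟨hpA j (le_trans hj hk0.1), ?_⟩
            show (torusDist y (p j) : ℝ) ≤ 6 * ℓ
            calc (torusDist y (p j) : ℝ) ≤ (L : ℝ) := Nat.cast_le.mpr (hbnd j hj)
              _ ≤ 6 * ℓ := hLle
          exact ⟨p k0, ⟨k0, p, hp0, rfl, hmem6, fun k hk => hpadj k (by omega)⟩, hk0.2⟩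
        · right
          push_neg at hex
          refine ⟨n, p, hp0, hpn, ?_, hpadj⟩
          intro k hk
          refine ⟨hpA k hk, ?_⟩
          show (torusDist y (p k) : ℝ) ≤ 6 * ℓ
          have h1 : (torusDist y (p k) : ℝ) ≤ (L : ℝ) :=
            Nat.cast_le.mpr (le_of_lt (hex k hk))
          linarith
      obtain ⟨a, ha, b, hb, hab⟩ :=
        exists_diam_realizer (⟨y, mem_compOf_self hyA⟩ : (compOf adj A y).Nonempty)
      have habL : L ≤ torusDist a b := by
        rw [hab, hLdef]
        exact Nat.ceil_le.mpr hydiam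
      rcases main a ha with ⟨c', hc', hLc'⟩ | ha6
      · calc ℓ ≤ (L : ℝ) := Nat.le_ceil ℓ
          _ ≤ (torusDist y c' : ℝ) := Nat.cast_le.mpr hLc'
          _ ≤ _ := Nat.cast_le.mpr (le_diamOf (mem_compOf_self hyB6) hc')
      · rcases main b hb with ⟨c', hc', hLc'⟩ | hb6
        · calc ℓ ≤ (L : ℝ) := Nat.le_ceil ℓ
            _ ≤ (torusDist y c' : ℝ) := Nat.cast_le.mpr hLc'
            _ ≤ _ := Nat.cast_le.mpr (le_diamOf (mem_compOf_self hyB6) hc')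
        · calc ℓ ≤ (L : ℝ) := Nat.le_ceil ℓ
            _ ≤ (torusDist a b : ℝ) := Nat.cast_le.mpr habL
            _ ≤ _ := Nat.cast_le.mpr (le_diamOf ha6 hb6)
    have hF6 : F y ∈ A ∩ torusBall y (6 * ℓ) :=
      ⟨(hF1 y).1, ball_mono y _ _ (by linarith) (hF1 y).2⟩
    have hFdiam6 : ℓ ≤ (diamOf torusDist
        (compOf adj (A ∩ torusBall y (6 * ℓ)) (F y)) : ℝ) := by
      refine le_trans (hF2 y) (Nat.cast_le.mpr ?_)
      exact diamOf_mono (compOf_mono (Set.inter_subset_inter_right A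
        (ball_mono y _ _ (by linarith))) _) ⟨F y, mem_compOf_self (hF1 y)⟩
    exact h2 y y hyB6 (F y) hF6 key hFdiam6
  -- Conclusion.
  set x0 : Torus d N := fun _ => 0 with hx0
  refine ⟨compOf adj A (F x0), ⟨⟨F x0, (hF1 x0).1, rfl⟩, ?_⟩, ?_⟩
  · refine le_trans (hF2 x0) (Nat.cast_le.mpr ?_)
    exact diamOf_mono (compOf_mono Set.inter_subset_left _)
      ⟨F x0, mem_compOf_self (hF1 x0)⟩
  · rintro C ⟨⟨x, hxA, rfl⟩, hCd⟩
    have hconn : connectedIn adj A x (F x0) :=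
      (claimSS x hxA hCd).trans (chainAll x x0)
    exact compOf_eq_of_conn (fun _ _ h => adj_symm' h) hconn

end Frag
end
end

section
/- Let d ≥ 3 and ε ∈ (0,1), and let B = B(0,N^{1−ε/2}) ⊂ T. Let λ^B_1 ≥ λ^B_2 be the two largest eigenvalues of the symmetric matrix P^B = ((2d)^{−1} 1_{x∼y})_{x,y ∈ T∖B}. There is a constant c = c(d,ε) > 0 such that for all sufficiently large N: λ^B_1 − λ^B_2 ≥ c N^{−2}. -/
open MeasureTheory Filter Classical
open scoped ENNReal NNReal

noncomputable section

namespace Frag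

/-- `l₂` is the second-largest eigenvalue (with multiplicity) of the killed
transition matrix `P^B`, characterized as the largest eigenvalue admitting an
eigenvector orthogonal to the principal eigenvector `v₁`. -/
def IsSecondEigenvalueGiven (d N : ℕ) (B : Set (Torus d N))
    (v₁ : Torus d N → ℝ) (l₂ : ℝ) : Prop :=
  (∃ v : Torus d N → ℝ, v ≠ 0 ∧ (∀ x ∈ B, v x = 0) ∧ (∑ᶠ x, v x * v₁ x) = 0 ∧
      ∀ x, x ∉ B → killedMul d N B v x = l₂ * v x) ∧
  ∀ l' : ℝ,
    (∃ v : Torus d N → ℝ, v ≠ 0 ∧ (∀ x ∈ B, v x = 0) ∧ (∑ᶠ x, v x * v₁ x) = 0 ∧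
      ∀ x, x ∉ B → killedMul d N B v x = l' * v x) → l' ≤ l₂

section Aux
variable {d N : ℕ} [NeZero N]

omit [NeZero N] in
lemma adj_comm (x y : Torus d N) : adj x y ↔ adj y x := by
  constructor <;>
  · rintro ⟨hne, i, hi, hj⟩
    exact ⟨hne.symm, i, hi.symm, fun j hj' => (hj j hj').symm⟩

/-- the `2d` neighbour candidates -/
def nbr (x : Torus d N) (p : Fin d × Bool) : Torus d N :=
  fun j => if j = p.1 then x j + (if p.2 then 1 else -1) else x j

omit [NeZero N] in
lemma nbr_apply_self (x : Torus d N) (i : Fin d) (s : Bool) :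
    nbr x (i, s) i = x i + (if s then 1 else -1) := by simp [nbr]

omit [NeZero N] in
lemma nbr_apply_ne (x : Torus d N) (i : Fin d) (s : Bool) {j : Fin d} (h : j ≠ i) :
    nbr x (i, s) j = x j := by simp [nbr, h]

omit [NeZero N] in
lemma two_ne_zero' (hN : 3 ≤ N) : (2 : ZMod N) ≠ 0 := by
  have h2 : ((2:ℕ) : ZMod N) = (2 : ZMod N) := by norm_cast
  intro h
  rw [← h2, ZMod.natCast_eq_zero_iff] at h
  have := Nat.le_of_dvd (by norm_num) h
  omega

lemma adj_iff_nbr (hN : 3 ≤ N) (x y : Torus d N) :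
    adj x y ↔ ∃ p : Fin d × Bool, y = nbr x p := by
  haveI : Fact (1 < N) := ⟨by omega⟩
  constructor
  · rintro ⟨hne, i, hi | hi, hj⟩
    · refine ⟨(i, true), funext fun j => ?_⟩
      by_cases h : j = i
      · subst h; rw [nbr_apply_self]; simpa using hi
      · rw [nbr_apply_ne _ _ _ h]; exact (hj j h).symm
    · refine ⟨(i, false), funext fun j => ?_⟩
      by_cases h : j = i
      · subst h; rw [nbr_apply_self]; simp only [Bool.false_eq_true, if_false]
        linear_combination -hi
      · rw [nbr_apply_ne _ _ _ h]; exact (hj j h).symm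
  · rintro ⟨⟨i, s⟩, rfl⟩
    have h1 : (1 : ZMod N) ≠ 0 := one_ne_zero
    refine ⟨?_, i, ?_, fun j hj => (nbr_apply_ne x i s hj).symm⟩
    · intro h
      have h' := congrFun h i
      rw [nbr_apply_self] at h'
      cases s
      · simp only [Bool.false_eq_true, if_false] at h'
        exact h1 (by linear_combination h')
      · simp only [if_true] at h'
        exact h1 (by linear_combination -h')
    · cases s
      · right; rw [nbr_apply_self]; simp only [Bool.false_eq_true, if_false]; ring
      · left; rw [nbr_apply_self]; simp

lemma nbr_inj (hN : 3 ≤ N) (x : Torus d N) : Function.Injective (nbr x) := by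
  haveI : Fact (1 < N) := ⟨by omega⟩
  rintro ⟨i, s⟩ ⟨j, t⟩ h
  have h1 : (1 : ZMod N) ≠ 0 := one_ne_zero
  by_cases hij : i = j
  · subst hij
    have h' := congrFun h i
    rw [nbr_apply_self, nbr_apply_self] at h'
    have hst : (if s then (1:ZMod N) else -1) = (if t then 1 else -1) :=
      add_left_cancel h'
    cases s <;> cases t <;> simp only [if_true, Bool.false_eq_true, if_false] at hst <;>
      first
        | rfl
        | exact absurd (by linear_combination hst) (two_ne_zero' hN)
        | exact absurd (by linear_combination -hst) (two_ne_zero' hN)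
  · exfalso
    have h' := congrFun h i
    rw [nbr_apply_self, nbr_apply_ne x j t hij] at h'
    cases s
    · simp only [Bool.false_eq_true, if_false] at h'
      exact h1 (by linear_combination -h')
    · simp only [if_true] at h'
      exact h1 (by linear_combination h')

end Aux

section Aux2
set_option linter.unusedSectionVars false
open Finset
variable {d N : ℕ} [NeZero N]

/-- coordinate shift vector -/
def evec (d N : ℕ) (i : Fin d) : Torus d N := Pi.single i 1

lemma nbr_true (x : Torus d N) (i : Fin d) : nbr x (i, true) = x + evec d N i := by
  funext j
  by_cases h : j = i
  · subst h; simp [nbr_apply_self, evec]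
  · simp [nbr_apply_ne x i true h, evec, Pi.single_eq_of_ne h]

lemma nbr_false (x : Torus d N) (i : Fin d) : nbr x (i, false) = x - evec d N i := by
  funext j
  by_cases h : j = i
  · subst h; simp [nbr_apply_self, evec, sub_eq_add_neg]
  · simp [nbr_apply_ne x i false h, evec, Pi.single_eq_of_ne h]

lemma sum_adj (hN : 3 ≤ N) (x : Torus d N) (g : Torus d N → ℝ) :
    ∑ y, (if adj x y then g y else 0)
      = ∑ i : Fin d, (g (x + evec d N i) + g (x - evec d N i)) := by
  classical
  rw [← Finset.sum_filter]
  have hfil : Finset.univ.filter (fun y => adj x y) = Finset.image (nbr x) Finset.univ := by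
    ext y
    simp only [Finset.mem_filter, Finset.mem_univ, true_and, Finset.mem_image]
    rw [adj_iff_nbr hN]
    constructor
    · rintro ⟨p, hp⟩; exact ⟨p, hp.symm⟩
    · rintro ⟨p, hp⟩; exact ⟨p, hp.symm⟩
  rw [hfil, Finset.sum_image (fun p _ q _ h => nbr_inj hN x h)]
  rw [Fintype.sum_prod_type]
  refine Finset.sum_congr rfl fun i _ => ?_
  rw [Fintype.sum_bool]
  rw [nbr_true, nbr_false]

lemma sum_adj_const (hN : 3 ≤ N) (x : Torus d N) (c : ℝ) :
    ∑ y, (if adj x y then c else 0) = 2 * d * c := by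
  rw [sum_adj hN x (fun _ => c)]
  simp [Finset.sum_const]
  ring

/-- inner product of two functions on the torus -/
noncomputable def sgIp (u w : Torus d N → ℝ) : ℝ := ∑ x, u x * w x

/-- full-torus transition operator -/
noncomputable def sgP (u : Torus d N → ℝ) (x : Torus d N) : ℝ :=
  ∑ y, if adj x y then u y / (2 * (d:ℝ)) else 0

/-- Dirichlet energy (over ordered adjacent pairs) -/
noncomputable def sgE (u : Torus d N → ℝ) : ℝ :=
  ∑ x, ∑ y, if adj x y then (u x - u y)^2 else 0

lemma sgIp_nonneg (u : Torus d N → ℝ) : 0 ≤ sgIp u u :=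
  Finset.sum_nonneg fun x _ => mul_self_nonneg _

lemma sgIp_pos {u : Torus d N → ℝ} (hu : u ≠ 0) : 0 < sgIp u u := by
  rcases Function.ne_iff.mp hu with ⟨x, hx⟩
  have : (0:ℝ) < u x * u x := mul_self_pos.mpr (by simpa using hx)
  exact Finset.sum_pos' (fun y _ => mul_self_nonneg _) ⟨x, Finset.mem_univ x, this⟩

lemma sgP_lin (a b : ℝ) (g h : Torus d N → ℝ) (x : Torus d N) :
    sgP (fun z => a * g z - b * h z) x = a * sgP g x - b * sgP h x := by
  unfold sgP
  rw [Finset.mul_sum, Finset.mul_sum, ← Finset.sum_sub_distrib]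
  refine Finset.sum_congr rfl fun y _ => ?_
  by_cases hxy : adj x y <;> simp [hxy] <;> ring

lemma sgIp_P_double (u w : Torus d N → ℝ) :
    sgIp u (sgP w) = (∑ x, ∑ y, if adj x y then u x * w y else 0) / (2 * (d:ℝ)) := by
  unfold sgIp sgP
  rw [Finset.sum_div]
  refine Finset.sum_congr rfl fun x _ => ?_
  rw [Finset.mul_sum, Finset.sum_div]
  refine Finset.sum_congr rfl fun y _ => ?_
  by_cases hxy : adj x y <;> simp [hxy] <;> ring

lemma sgIp_P_symm (u w : Torus d N → ℝ) : sgIp u (sgP w) = sgIp w (sgP u) := by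
  rw [sgIp_P_double, sgIp_P_double]
  congr 1
  rw [Finset.sum_comm]
  refine Finset.sum_congr rfl fun x _ => Finset.sum_congr rfl fun y _ => ?_
  by_cases hxy : adj x y
  · rw [if_pos hxy, if_pos ((adj_comm x y).mp hxy), mul_comm]
  · rw [if_neg hxy, if_neg (fun h => hxy ((adj_comm y x).mp h))]

lemma sgE_eq (hd : 0 < d) (hN : 3 ≤ N) (u : Torus d N → ℝ) :
    sgE u = 4 * d * (sgIp u u - sgIp u (sgP u)) := by
  have hdd : (2 * (d:ℝ)) ≠ 0 := by positivity
  have e1 : ∀ x : Torus d N, (∑ y, if adj x y then (u x - u y)^2 else 0)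
      = 2*(d:ℝ)*(u x * u x) + (∑ y, if adj x y then u y * u y else 0)
        - 2 * ∑ y, if adj x y then u x * u y else 0 := by
    intro x
    have ha : ∑ y, (if adj x y then u x * u x else 0) = 2*(d:ℝ)*(u x * u x) :=
      sum_adj_const hN x _
    rw [← ha, ← Finset.sum_add_distrib, Finset.mul_sum, ← Finset.sum_sub_distrib]
    exact Finset.sum_congr rfl fun y _ => by by_cases hxy : adj x y <;> simp [hxy] <;> ring
  have e3 : (∑ x : Torus d N, ∑ y, if adj x y then u y * u y else 0)
      = 2 * (d:ℝ) * sgIp u u := by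
    rw [Finset.sum_comm]
    have h3 : ∀ y : Torus d N, (∑ x, if adj x y then u y * u y else 0)
        = 2*(d:ℝ)*(u y * u y) := by
      intro y
      have : ∀ x : Torus d N, (if adj x y then u y * u y else 0)
          = (if adj y x then u y * u y else 0) := fun x => by
        by_cases h : adj x y
        · rw [if_pos h, if_pos ((adj_comm x y).mp h)]
        · rw [if_neg h, if_neg (fun h' => h ((adj_comm y x).mp h'))]
      rw [Finset.sum_congr rfl fun x _ => this x, sum_adj_const hN]
    rw [Finset.sum_congr rfl fun y _ => h3 y, ← Finset.mul_sum]
    rfl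
  unfold sgE
  rw [Finset.sum_congr rfl fun x _ => e1 x, Finset.sum_sub_distrib, Finset.sum_add_distrib,
    e3, ← Finset.mul_sum, ← Finset.mul_sum]
  rw [sgIp_P_double]
  have hip : (∑ i : Torus d N, u i * u i) = sgIp u u := rfl
  field_simp
  rw [show (∑ x : Torus d N, u x ^ 2) = sgIp u u by rw [← hip]; exact Finset.sum_congr rfl fun x _ => sq (u x)]
  ring

end Aux2

section Aux3
set_option linter.unusedSectionVars false
open Finset
variable {d N : ℕ} [NeZero N]

lemma update_add_evec (p : Torus d N) (k : Fin d) (c : ZMod N) :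
    Function.update p k c + evec d N k = Function.update p k (c + 1) := by
  funext j
  by_cases h : j = k
  · subst h; simp [evec]
  · simp [Function.update_of_ne h, evec, Pi.single_eq_of_ne h]

/-- single-step energy in direction `k` -/
noncomputable def sgDk (u : Torus d N → ℝ) (k : Fin d) (p : Torus d N) : ℝ :=
  (u (p + evec d N k) - u p)^2

noncomputable def sgEk (u : Torus d N → ℝ) (k : Fin d) : ℝ := ∑ p, sgDk u k p

lemma sgDk_nonneg (u : Torus d N → ℝ) (k : Fin d) (p : Torus d N) : 0 ≤ sgDk u k p :=
  sq_nonneg _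

/-- 1-D telescoping bound -/
lemma oneD_bound (u : Torus d N → ℝ) (k : Fin d) (p : Torus d N) (b : ZMod N) :
    (u (Function.update p k b) - u p)^2
      ≤ N * ∑ c : ZMod N, sgDk u k (Function.update p k c) := by
  classical
  set t : ℕ := (b - p k).val with ht
  set h : ℕ → ℝ := fun j => u (Function.update p k (p k + j)) with hh
  have h0 : h 0 = u p := by simp [hh]
  have hT : h t = u (Function.update p k b) := by
    simp only [hh, ht]
    congr 1
    rw [ZMod.natCast_rightInverse (b - p k)]
    congr 1
    ring
  have tele : u (Function.update p k b) - u p = ∑ j ∈ Finset.range t, (h (j+1) - h j) := by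
    rw [Finset.sum_range_sub h t, h0, hT]
  rw [tele]
  calc (∑ j ∈ Finset.range t, (h (j+1) - h j))^2
      ≤ (Finset.range t).card * ∑ j ∈ Finset.range t, (h (j+1) - h j)^2 :=
        sq_sum_le_card_mul_sum_sq
    _ = t * ∑ j ∈ Finset.range t, (h (j+1) - h j)^2 := by rw [Finset.card_range]
    _ ≤ N * ∑ j ∈ Finset.range N, (h (j+1) - h j)^2 := by
        have h1 : (t:ℝ) ≤ N := by
          have := ZMod.val_lt (b - p k)
          exact_mod_cast this.le
        have h2 : ∑ j ∈ Finset.range t, (h (j+1) - h j)^2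
            ≤ ∑ j ∈ Finset.range N, (h (j+1) - h j)^2 := by
          apply Finset.sum_le_sum_of_subset_of_nonneg
          · exact Finset.range_subset_range.mpr (ZMod.val_lt (b - p k)).le
          · intros; positivity
        have h3 : (0:ℝ) ≤ ∑ j ∈ Finset.range t, (h (j+1) - h j)^2 :=
          Finset.sum_nonneg fun _ _ => sq_nonneg _
        nlinarith
    _ = N * ∑ c : ZMod N, sgDk u k (Function.update p k c) := by
        congr 1
        apply Finset.sum_nbij' (fun j : ℕ => p k + (j : ZMod N))
          (fun c : ZMod N => (c - p k).val)
        · intros; exact Finset.mem_univ _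
        · intro c _
          simp only [Finset.mem_range]
          exact ZMod.val_lt _
        · intro j hj
          simp only [Finset.mem_range] at hj
          have : ((p k + (j:ZMod N)) - p k) = (j : ZMod N) := by ring
          rw [this, ZMod.val_natCast, Nat.mod_eq_of_lt hj]
        · intro c _
          rw [ZMod.natCast_rightInverse (c - p k)]
          ring
        · intro j hj
          unfold sgDk
          rw [update_add_evec]
          have : p k + (j:ZMod N) + 1 = p k + ((j:ℕ)+1 : ℕ) := by push_cast; ring
          rw [this]

end Aux3

section Aux4
set_option linter.unusedSectionVars false
open Finset
variable {d N : ℕ} [NeZero N]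

/-- hybrid interpolation between `x` and `y` -/
def zf (k : ℕ) (xy : Torus d N × Torus d N) : Torus d N :=
  fun j => if (j:ℕ) < k then xy.2 j else xy.1 j

def psiMap (k : ℕ) (xy : Torus d N × Torus d N) : Torus d N × Torus d N :=
  (zf k xy, fun j => if (j:ℕ) < k then xy.1 j else xy.2 j)

lemma psiMap_involutive (k : ℕ) : Function.Involutive (psiMap (d := d) (N := N) k) := by
  intro xy
  unfold psiMap zf
  refine Prod.ext ?_ ?_ <;> · funext j; by_cases h : (j:ℕ) < k <;> simp [h]

lemma zf_zero (xy : Torus d N × Torus d N) : zf 0 xy = xy.1 := by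
  funext j; simp [zf]

lemma zf_d (xy : Torus d N × Torus d N) : zf d xy = xy.2 := by
  funext j; simp [zf, j.isLt]

lemma zf_succ (k : Fin d) (xy : Torus d N × Torus d N) :
    zf (k+1) xy = Function.update (zf k xy) k (xy.2 k) := by
  funext j
  by_cases h : j = k
  · subst h; simp [zf, Function.update_self]
  · rw [Function.update_of_ne h]
    have hjk : (j:ℕ) ≠ (k:ℕ) := fun hc => h (Fin.ext hc)
    unfold zf
    by_cases h' : (j:ℕ) < k
    · rw [if_pos (by omega), if_pos h']
    · rw [if_neg (by omega), if_neg h']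

lemma step_sum_eq (u : Torus d N → ℝ) (k : Fin d) :
    ∑ xy : Torus d N × Torus d N, (u (zf k xy) - u (zf (k+1) xy))^2
      = ∑ pq : Torus d N × Torus d N, (u pq.1 - u (Function.update pq.1 k (pq.2 k)))^2 := by
  apply Fintype.sum_bijective (psiMap (k:ℕ)) (psiMap_involutive (k:ℕ)).bijective
  intro xy
  rw [zf_succ]
  have h1 : (psiMap (k:ℕ) xy).1 = zf k xy := rfl
  have h2 : (psiMap (k:ℕ) xy).2 k = xy.2 k := by
    show (if ((k:Fin d):ℕ) < (k:ℕ) then xy.1 k else xy.2 k) = xy.2 k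
    rw [if_neg (lt_irrefl _)]
  rw [h1, h2]

lemma pair_bound (u : Torus d N → ℝ) (xy : Torus d N × Torus d N) :
    (u xy.1 - u xy.2)^2 ≤ d * ∑ k : Fin d, (u (zf k xy) - u (zf (k+1) xy))^2 := by
  have tele : u xy.2 - u xy.1 = ∑ k ∈ Finset.range d, (u (zf (k+1) xy) - u (zf k xy)) := by
    rw [Finset.sum_range_sub (fun k => u (zf k xy)) d, zf_zero, zf_d]
  have h1 : (u xy.1 - u xy.2)^2 = (u xy.2 - u xy.1)^2 := by ring
  rw [h1, tele]
  calc (∑ k ∈ Finset.range d, (u (zf (k+1) xy) - u (zf k xy)))^2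
      ≤ (Finset.range d).card * ∑ k ∈ Finset.range d, (u (zf (k+1) xy) - u (zf k xy))^2 :=
        sq_sum_le_card_mul_sum_sq
    _ = d * ∑ k : Fin d, (u (zf (k+1) xy) - u (zf k xy))^2 := by
        rw [Finset.card_range, Finset.sum_range fun k => (u (zf (k+1) xy) - u (zf k xy))^2]
    _ = d * ∑ k : Fin d, (u (zf k xy) - u (zf (k+1) xy))^2 := by
        congr 1; exact Finset.sum_congr rfl fun k _ => by ring

lemma sum_coord_fun (k : Fin d) (g : ZMod N → ℝ) :
    ∑ q : Torus d N, g (q k) = (N:ℝ)^(d-1) * ∑ b : ZMod N, g b := by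
  classical
  rw [← Equiv.sum_comp (Equiv.funSplitAt k (ZMod N)).symm (fun q : Torus d N => g (q k))]
  have : ∀ p : ZMod N × ({ j : Fin d // j ≠ k } → ZMod N),
      g (((Equiv.funSplitAt k (ZMod N)).symm p) k) = g p.1 := by
    intro p; congr 1; simp
  rw [Fintype.sum_congr _ _ this, Fintype.sum_prod_type]
  have hcard : Fintype.card ({ j : Fin d // j ≠ k } → ZMod N) = N^(d-1) := by
    rw [Fintype.card_fun, ZMod.card]
    congr 1
    rw [Fintype.card_subtype_compl, Fintype.card_subtype_eq, Fintype.card_fin]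
  rw [Finset.sum_comm]
  have h2 : ∑ y : { j : Fin d // j ≠ k } → ZMod N, ∑ x : ZMod N, g (x, y).1
      = ∑ _y : { j : Fin d // j ≠ k } → ZMod N, ∑ x : ZMod N, g x := rfl
  rw [h2, Finset.sum_const, Finset.card_univ, hcard, nsmul_eq_mul]
  push_cast
  ring

lemma sum_update_eq (k : Fin d) (G : Torus d N → ℝ) :
    ∑ p : Torus d N, ∑ c : ZMod N, G (Function.update p k c) = N * ∑ p, G p := by
  classical
  rw [Finset.sum_comm]
  have key : ∀ c : ZMod N, ∑ p : Torus d N, G (Function.update p k c)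
      = N * ∑ r : { j : Fin d // j ≠ k } → ZMod N,
          G ((Equiv.funSplitAt k (ZMod N)).symm (c, r)) := by
    intro c
    rw [← Equiv.sum_comp (Equiv.funSplitAt k (ZMod N)).symm
        (fun p : Torus d N => G (Function.update p k c))]
    have h1 : ∀ p : ZMod N × ({ j : Fin d // j ≠ k } → ZMod N),
        G (Function.update ((Equiv.funSplitAt k (ZMod N)).symm p) k c)
          = G ((Equiv.funSplitAt k (ZMod N)).symm (c, p.2)) := by
      intro p
      congr 1
      funext j
      by_cases h : j = k
      · subst h
        simp [Equiv.piSplitAt]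
      · rw [Function.update_of_ne h]
        simp [Equiv.piSplitAt, h]
    rw [Fintype.sum_congr _ _ h1, Fintype.sum_prod_type]
    have h2 : (∑ x : ZMod N, ∑ y : { j : Fin d // j ≠ k } → ZMod N,
        G ((Equiv.funSplitAt k (ZMod N)).symm (c, (x, y).2)))
      = ∑ _x : ZMod N, ∑ r : { j : Fin d // j ≠ k } → ZMod N,
        G ((Equiv.funSplitAt k (ZMod N)).symm (c, r)) := rfl
    rw [h2, Finset.sum_const, Finset.card_univ, ZMod.card, nsmul_eq_mul]
  rw [Finset.sum_congr rfl fun c _ => key c, ← Finset.mul_sum]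
  congr 1
  rw [← Equiv.sum_comp (Equiv.funSplitAt k (ZMod N)).symm G, Fintype.sum_prod_type]

end Aux4

section Aux5
set_option linter.unusedSectionVars false
open Finset
variable {d N : ℕ} [NeZero N]

lemma sgE_twice (hN : 3 ≤ N) (u : Torus d N → ℝ) :
    sgE u = 2 * ∑ k : Fin d, sgEk u k := by
  unfold sgE
  have e1 : ∀ x : Torus d N, (∑ y, if adj x y then (u x - u y)^2 else 0)
      = ∑ i : Fin d, ((u x - u (x + evec d N i))^2 + (u x - u (x - evec d N i))^2) :=
    fun x => sum_adj hN x _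
  rw [Finset.sum_congr rfl fun x _ => e1 x, Finset.sum_comm]
  have e2 : ∀ i : Fin d, ∑ x : Torus d N,
      ((u x - u (x + evec d N i))^2 + (u x - u (x - evec d N i))^2)
        = sgEk u i + sgEk u i := by
    intro i
    rw [Finset.sum_add_distrib]
    congr 1
    · unfold sgEk
      exact Finset.sum_congr rfl fun x _ => by unfold sgDk; ring
    · unfold sgEk
      apply Fintype.sum_bijective (fun z : Torus d N => z - evec d N i)
        (Equiv.subRight (evec d N i)).bijective
      intro x
      unfold sgDk
      rw [sub_add_cancel]
  rw [Finset.sum_congr rfl fun i _ => e2 i]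
  rw [Finset.sum_add_distrib]
  ring

lemma poincare (hd : 0 < d) (hN : 3 ≤ N) (u : Torus d N → ℝ) (hu : ∑ x, u x = 0) :
    4 * sgIp u u ≤ (d:ℝ) * N^2 * sgE u := by
  have hcard : (Fintype.card (Torus d N) : ℝ) = (N:ℝ)^d := by
    rw [Fintype.card_fun, ZMod.card, Fintype.card_fin]
    push_cast; ring
  have hA : ∑ xy : Torus d N × Torus d N, (u xy.1 - u xy.2)^2
      = 2 * (N:ℝ)^d * sgIp u u := by
    rw [Fintype.sum_prod_type]
    have e1 : ∀ x : Torus d N, ∑ y : Torus d N, (u x - u y)^2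
        = (N:ℝ)^d * (u x * u x) + sgIp u u := by
      intro x
      calc ∑ y : Torus d N, (u x - u y)^2
          = ∑ y : Torus d N, (u x * u x - 2 * u x * u y + u y * u y) :=
            Finset.sum_congr rfl fun y _ => by ring
        _ = ((∑ _y : Torus d N, u x * u x) - ∑ y : Torus d N, 2 * u x * u y)
              + ∑ y : Torus d N, u y * u y := by
            rw [Finset.sum_add_distrib, Finset.sum_sub_distrib]
        _ = (N:ℝ)^d * (u x * u x) + sgIp u u := by
            rw [Finset.sum_const, Finset.card_univ, nsmul_eq_mul, hcard, ← Finset.mul_sum, hu,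
              mul_zero, sub_zero]
            rfl
    rw [Finset.sum_congr rfl fun x _ => e1 x, Finset.sum_add_distrib, ← Finset.mul_sum,
      Finset.sum_const, Finset.card_univ, nsmul_eq_mul, hcard]
    have h'' : (∑ x : Torus d N, u x * u x) = sgIp u u := rfl
    rw [h'']
    ring
  have step1 : ∀ k : Fin d,
      ∑ xy : Torus d N × Torus d N, (u (zf k xy) - u (zf ((k:ℕ)+1) xy))^2
        ≤ (N:ℝ)^(d-1) * ((N:ℝ) * (N:ℝ) * ((N:ℝ) * sgEk u k)) := by
    intro k
    rw [step_sum_eq, Fintype.sum_prod_type]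
    have e2 : ∀ p : Torus d N, ∑ q : Torus d N, (u p - u (Function.update p k (q k)))^2
        = (N:ℝ)^(d-1) * ∑ b : ZMod N, (u p - u (Function.update p k b))^2 :=
      fun p => sum_coord_fun k (fun b => (u p - u (Function.update p k b))^2)
    rw [Finset.sum_congr rfl fun p _ => e2 p, ← Finset.mul_sum]
    have hP : (0:ℝ) ≤ (N:ℝ)^(d-1) := by positivity
    apply mul_le_mul_of_nonneg_left _ hP
    have e3 : ∑ p : Torus d N, ∑ b : ZMod N, (u p - u (Function.update p k b))^2
        ≤ ∑ p : Torus d N, ∑ _b : ZMod N,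
            ((N:ℝ) * ∑ c : ZMod N, sgDk u k (Function.update p k c)) := by
      refine Finset.sum_le_sum fun p _ => Finset.sum_le_sum fun b _ => ?_
      calc (u p - u (Function.update p k b))^2
          = (u (Function.update p k b) - u p)^2 := by ring
        _ ≤ (N:ℝ) * ∑ c : ZMod N, sgDk u k (Function.update p k c) := oneD_bound u k p b
    refine e3.trans (le_of_eq ?_)
    have e4 : ∀ p : Torus d N, ∑ _b : ZMod N,
        ((N:ℝ) * ∑ c : ZMod N, sgDk u k (Function.update p k c))
          = (N:ℝ) * ((N:ℝ) * ∑ c : ZMod N, sgDk u k (Function.update p k c)) := by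
      intro p
      rw [Finset.sum_const, Finset.card_univ, ZMod.card, nsmul_eq_mul]
    rw [Finset.sum_congr rfl fun p _ => e4 p, ← Finset.mul_sum, ← Finset.mul_sum,
      sum_update_eq k (fun q => sgDk u k q)]
    unfold sgEk
    ring
  have hAle : ∑ xy : Torus d N × Torus d N, (u xy.1 - u xy.2)^2
      ≤ (d:ℝ) * ∑ k : Fin d,
          ∑ xy : Torus d N × Torus d N, (u (zf k xy) - u (zf ((k:ℕ)+1) xy))^2 := by
    calc ∑ xy : Torus d N × Torus d N, (u xy.1 - u xy.2)^2
        ≤ ∑ xy : Torus d N × Torus d N,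
            ((d:ℝ) * ∑ k : Fin d, (u (zf k xy) - u (zf ((k:ℕ)+1) xy))^2) :=
          Finset.sum_le_sum fun xy _ => pair_bound u xy
      _ = (d:ℝ) * ∑ k : Fin d,
            ∑ xy : Torus d N × Torus d N, (u (zf k xy) - u (zf ((k:ℕ)+1) xy))^2 := by
          rw [← Finset.mul_sum, Finset.sum_comm]
  have hcomb : 2 * (N:ℝ)^d * sgIp u u
      ≤ (d:ℝ) * ((N:ℝ)^(d-1) * ((N:ℝ) * (N:ℝ) * ((N:ℝ) * (sgE u / 2)))) := by
    rw [hA] at hAle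
    have hsum : ∑ k : Fin d, sgEk u k = sgE u / 2 := by
      rw [sgE_twice hN u]; ring
    calc 2 * (N:ℝ)^d * sgIp u u
        ≤ (d:ℝ) * ∑ k : Fin d,
            ∑ xy : Torus d N × Torus d N, (u (zf k xy) - u (zf ((k:ℕ)+1) xy))^2 := hAle
      _ ≤ (d:ℝ) * ∑ k : Fin d, (N:ℝ)^(d-1) * ((N:ℝ) * (N:ℝ) * ((N:ℝ) * sgEk u k)) := by
          apply mul_le_mul_of_nonneg_left (Finset.sum_le_sum fun k _ => step1 k)
          positivity
      _ = (d:ℝ) * ((N:ℝ)^(d-1) * ((N:ℝ) * (N:ℝ) * ((N:ℝ) * (sgE u / 2)))) := by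
          rw [← hsum]
          have hx : ∑ k : Fin d, (N:ℝ)^(d-1) * ((N:ℝ)*(N:ℝ)*((N:ℝ) * sgEk u k))
              = (N:ℝ)^(d-1) * ((N:ℝ)*(N:ℝ)*((N:ℝ) * ∑ k : Fin d, sgEk u k)) := by
            simp only [Finset.mul_sum]
          rw [hx]
  have hNpos : (0:ℝ) < (N:ℝ) := by positivity
  have hPpos : (0:ℝ) < (N:ℝ)^(d-1) := by positivity
  have hpow : (N:ℝ)^d = (N:ℝ)^(d-1) * (N:ℝ) := by
    rw [← pow_succ]
    congr 1
    omega
  rw [hpow] at hcomb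
  have := mul_pos hPpos hNpos
  nlinarith [hcomb]
end Aux5



section Aux6
set_option linter.unusedSectionVars false
open Finset
variable {d N : ℕ} [NeZero N]

/-- distance to `0` in `ZMod N` -/
def sgDz (a : ZMod N) : ℕ := min (-a).val a.val

lemma torusDist_zero (x : Torus d N) :
    torusDist 0 x = Finset.univ.sup fun i => sgDz (x i) := by
  unfold torusDist sgDz
  congr 1
  funext i
  rw [Pi.zero_apply, zero_sub, sub_zero]

lemma sgDz_neg (a : ZMod N) : sgDz (-a) = sgDz a := by
  unfold sgDz
  rw [neg_neg, min_comm]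

lemma sgDz_add_one (hN : 3 ≤ N) (a : ZMod N) : sgDz (a + 1) ≤ sgDz a + 1 := by
  haveI : Fact (1 < N) := ⟨by omega⟩
  rcases eq_or_ne a 0 with rfl | ha
  · simp [sgDz, ZMod.val_one]
  rcases eq_or_ne a (-1) with rfl | ha1
  · simp [sgDz]
  have hval : a.val ≠ 0 := fun h => ha (by rwa [ZMod.val_eq_zero] at h)
  have hvalN : a.val ≠ N - 1 := by
    intro h
    apply ha1
    have : a = ((N - 1 : ℕ) : ZMod N) := by
      rw [← h, ZMod.natCast_rightInverse a]
    rw [this]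
    push_cast [Nat.cast_sub (by omega : 1 ≤ N)]
    simp
  have hlt := ZMod.val_lt a
  have ha1' : a + 1 ≠ 0 := by
    intro h
    apply hvalN
    have : a = -1 := by linear_combination h
    rw [this] at hval ⊢
    rw [ZMod.neg_val]
    simp only [if_neg (by exact fun h0 => one_ne_zero (h0 : (1:ZMod N) = 0))]
    rw [ZMod.val_one]
  have hv1 : (a + 1).val = a.val + 1 := by
    have : a + 1 = ((a.val + 1 : ℕ) : ZMod N) := by
      push_cast [ZMod.natCast_rightInverse a]
      ring
    rw [this, ZMod.val_cast_of_lt (by omega)]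
  have hn1 : (-(a+1)).val = N - (a.val + 1) := by
    rw [ZMod.neg_val, if_neg ha1', hv1]
  have hna : (-a).val = N - a.val := by
    rw [ZMod.neg_val, if_neg ha]
  unfold sgDz
  rw [hv1, hn1, hna]
  omega

lemma sgDz_sub_one (hN : 3 ≤ N) (a : ZMod N) : sgDz (a - 1) ≤ sgDz a + 1 := by
  have h : a - 1 = -((-a) + 1) := by ring
  rw [h, sgDz_neg]
  calc sgDz (-a + 1) ≤ sgDz (-a) + 1 := sgDz_add_one hN (-a)
    _ = sgDz a + 1 := by rw [sgDz_neg]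

lemma dist_nbr_le (hN : 3 ≤ N) (x : Torus d N) (p : Fin d × Bool) :
    torusDist 0 (nbr x p) ≤ torusDist 0 x + 1 := by
  obtain ⟨i, s⟩ := p
  rw [torusDist_zero, torusDist_zero]
  apply Finset.sup_le
  intro j _
  by_cases h : j = i
  · subst h
    rw [nbr_apply_self]
    have hle : sgDz (x j) ≤ Finset.univ.sup fun i => sgDz (x i) :=
      Finset.le_sup (f := fun i => sgDz (x i)) (Finset.mem_univ j)
    cases s
    · simp only [Bool.false_eq_true, if_false]
      calc sgDz (x j + -1) = sgDz (x j - 1) := by rw [← sub_eq_add_neg]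
        _ ≤ sgDz (x j) + 1 := sgDz_sub_one hN _
        _ ≤ _ := by omega
    · simp only [if_true]
      calc sgDz (x j + 1) ≤ sgDz (x j) + 1 := sgDz_add_one hN _
        _ ≤ _ := by omega
  · rw [nbr_apply_ne _ _ _ h]
    calc sgDz (x j) ≤ Finset.univ.sup fun i => sgDz (x i) :=
        Finset.le_sup (f := fun i => sgDz (x i)) (Finset.mem_univ j)
      _ ≤ _ := by omega

lemma adj_dist_le (hN : 3 ≤ N) {x y : Torus d N} (h : adj x y) :
    torusDist 0 y ≤ torusDist 0 x + 1 := by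
  rcases (adj_iff_nbr hN x y).mp h with ⟨p, rfl⟩
  exact dist_nbr_le hN x p

lemma card_zmod_ball (k : ℕ) :
    (Finset.univ.filter fun a : ZMod N => sgDz a ≤ k).card ≤ 2*k+1 := by
  classical
  have hsub : (Finset.univ.filter fun a : ZMod N => sgDz a ≤ k)
      ⊆ Finset.image (fun t : ℤ => (t : ZMod N)) (Finset.Icc (-(k:ℤ)) k) := by
    intro a ha
    rw [Finset.mem_filter] at ha
    rcases min_le_iff.mp ha.2 with hL | hR
    · refine Finset.mem_image.mpr ⟨-(((-a).val : ℤ)), ?_, ?_⟩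
      · rw [Finset.mem_Icc]
        have hL' : (((-a).val : ℤ)) ≤ k := by exact_mod_cast hL
        have : (0:ℤ) ≤ ((-a).val : ℤ) := by positivity
        omega
      · push_cast
        rw [ZMod.natCast_rightInverse (-a)]
        ring
    · refine Finset.mem_image.mpr ⟨((a.val : ℤ)), ?_, ?_⟩
      · rw [Finset.mem_Icc]
        have hR' : ((a.val : ℤ)) ≤ k := by exact_mod_cast hR
        have : (0:ℤ) ≤ (a.val : ℤ) := by positivity
        omega
      · push_cast
        rw [ZMod.natCast_rightInverse a]
  calc (Finset.univ.filter fun a : ZMod N => sgDz a ≤ k).card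
      ≤ (Finset.image (fun t : ℤ => (t : ZMod N)) (Finset.Icc (-(k:ℤ)) k)).card :=
        Finset.card_le_card hsub
    _ ≤ (Finset.Icc (-(k:ℤ)) k).card := Finset.card_image_le
    _ = 2*k+1 := by rw [Int.card_Icc]; omega

lemma card_torus_ball (k : ℕ) :
    (Finset.univ.filter fun x : Torus d N => torusDist 0 x ≤ k).card ≤ (2*k+1)^d := by
  classical
  have hsub : (Finset.univ.filter fun x : Torus d N => torusDist 0 x ≤ k)
      ⊆ Fintype.piFinset (fun _ : Fin d => Finset.univ.filter fun a : ZMod N => sgDz a ≤ k) := by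
    intro x hx
    rw [Finset.mem_filter, torusDist_zero] at hx
    rw [Fintype.mem_piFinset]
    intro i
    rw [Finset.mem_filter]
    exact ⟨Finset.mem_univ _, (Finset.sup_le_iff.mp hx.2) i (Finset.mem_univ i)⟩
  calc (Finset.univ.filter fun x : Torus d N => torusDist 0 x ≤ k).card
      ≤ _ := Finset.card_le_card hsub
    _ = ∏ _i : Fin d, (Finset.univ.filter fun a : ZMod N => sgDz a ≤ k).card :=
        Fintype.card_piFinset _
    _ = (Finset.univ.filter fun a : ZMod N => sgDz a ≤ k).card ^ d := by
        rw [Finset.prod_const, Finset.card_univ, Fintype.card_fin]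
    _ ≤ (2*k+1)^d := Nat.pow_le_pow_left (card_zmod_ball k) d

lemma card_torus_far (k : ℕ) :
    N^d ≤ (Finset.univ.filter fun x : Torus d N => ¬ (torusDist 0 x ≤ k)).card + (2*k+1)^d := by
  classical
  have htot := Finset.card_filter_add_card_filter_not
    (s := (Finset.univ : Finset (Torus d N))) (p := fun x => torusDist 0 x ≤ k)
  have hcard : (Finset.univ : Finset (Torus d N)).card = N^d := by
    rw [Finset.card_univ, Fintype.card_fun, ZMod.card, Fintype.card_fin]
  have := card_torus_ball (d := d) (N := N) k
  omega

end Aux6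



section Aux7
set_option linter.unusedSectionVars false
open Finset
variable {d N : ℕ} [NeZero N]

lemma killedMul_eq_sum (B : Set (Torus d N)) (v : Torus d N → ℝ) (x : Torus d N) :
    killedMul d N B v x = ∑ y, if y ∉ B ∧ adj x y then v y / (2 * (d:ℝ)) else 0 := by
  unfold killedMul
  exact finsum_eq_sum_of_fintype _

lemma killedMul_eq_sgP (B : Set (Torus d N)) (v : Torus d N → ℝ)
    (hvB : ∀ x ∈ B, v x = 0) (x : Torus d N) :
    killedMul d N B v x = sgP v x := by
  rw [killedMul_eq_sum]
  unfold sgP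
  refine Finset.sum_congr rfl fun y _ => ?_
  by_cases hyB : y ∈ B
  · by_cases hxy : adj x y <;> simp [hyB, hxy, hvB y hyB]
  · by_cases hxy : adj x y <;> simp [hyB, hxy]

lemma exists_top_eigen (hd : 0 < d) (B : Set (Torus d N)) (f : Torus d N → ℝ)
    (hfB : ∀ x ∈ B, f x = 0) (hfne : f ≠ 0) (hpos : 0 < sgIp f (sgP f)) :
    ∃ l : ℝ, IsKilledEigenvalue d N B l ∧ sgIp f (sgP f) / sgIp f f ≤ l := by
  classical
  set M : Matrix (Torus d N) (Torus d N) ℝ :=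
    Matrix.of (fun x y => if x ∉ B ∧ y ∉ B ∧ adj x y then (2*(d:ℝ))⁻¹ else 0) with hM
  have hMsym : ∀ x y, M x y = M y x := by
    intro x y
    show (if x ∉ B ∧ y ∉ B ∧ adj x y then (2*(d:ℝ))⁻¹ else 0)
      = (if y ∉ B ∧ x ∉ B ∧ adj y x then (2*(d:ℝ))⁻¹ else 0)
    by_cases h : x ∉ B ∧ y ∉ B ∧ adj x y
    · rw [if_pos h, if_pos ⟨h.2.1, h.1, (adj_comm x y).mp h.2.2⟩]
    · rw [if_neg h, if_neg (fun h' => h ⟨h'.2.1, h'.1, (adj_comm y x).mp h'.2.2⟩)]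
  have hHerm : M.IsHermitian := by
    apply Matrix.IsHermitian.ext
    intro i j
    rw [star_trivial]
    exact hMsym j i
  set T : EuclideanSpace ℝ (Torus d N) →ₗ[ℝ] EuclideanSpace ℝ (Torus d N) :=
    Matrix.toEuclideanLin M with hT
  have hTsym : T.IsSymmetric := Matrix.isHermitian_iff_isSymmetric.mp hHerm
  set fE : EuclideanSpace ℝ (Torus d N) := (WithLp.equiv 2 (Torus d N → ℝ)).symm f with hfE
  have hfEne : fE ≠ 0 := by
    intro h
    apply hfne
    have := congrArg (WithLp.equiv 2 (Torus d N → ℝ)) h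
    exact (WithLp.equiv 2 (Torus d N → ℝ)).symm.injective (by rw [← hfE, h]; rfl)
  haveI : Nontrivial (EuclideanSpace ℝ (Torus d N)) := ⟨⟨fE, 0, hfEne⟩⟩
  -- the eigenvalue
  set μ : ℝ := ⨆ x : { x : EuclideanSpace ℝ (Torus d N) // x ≠ 0 },
    RCLike.re (inner (𝕜 := ℝ) (T x) (x : EuclideanSpace ℝ (Torus d N))) / ‖(x : EuclideanSpace ℝ (Torus d N))‖ ^ 2 with hμ
  have hEig : Module.End.HasEigenvalue T μ :=
    hTsym.hasEigenvalue_iSup_of_finiteDimensional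
  -- T applied coordinatewise
  have hTapp : ∀ (v : EuclideanSpace ℝ (Torus d N)) (x : Torus d N),
      (WithLp.equiv 2 (Torus d N → ℝ)) (T v) x
        = ∑ y, M x y * (WithLp.equiv 2 (Torus d N → ℝ)) v y := by
    intro v x
    rw [hT]
    rfl
  -- inner products
  have hinner : ∀ v w : EuclideanSpace ℝ (Torus d N),
      inner (𝕜 := ℝ) v w = ∑ x, (WithLp.equiv 2 (Torus d N → ℝ)) v x
        * (WithLp.equiv 2 (Torus d N → ℝ)) w x := by
    intro v w
    rw [PiLp.inner_apply]
    exact Finset.sum_congr rfl fun i _ => Real.inner_apply _ _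
  -- Rayleigh quotient at f
  have hfEapp : ∀ x, (WithLp.equiv 2 (Torus d N → ℝ)) fE x = f x := fun x => by
    rw [hfE]; simp
  have hray : inner (𝕜 := ℝ) (T fE) fE = sgIp f (sgP f) := by
    rw [hinner]
    have hpt : ∀ x : Torus d N,
        (WithLp.equiv 2 (Torus d N → ℝ)) (T fE) x * (WithLp.equiv 2 (Torus d N → ℝ)) fE x
          = f x * sgP f x := by
      intro x
      rw [hTapp, hfEapp]
      by_cases hxB : x ∈ B
      · rw [hfB x hxB, mul_zero, zero_mul]
      · rw [mul_comm]
        congr 1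
        unfold sgP
        refine Finset.sum_congr rfl fun y _ => ?_
        rw [hfEapp]
        by_cases hyB : y ∈ B
        · by_cases hxy : adj x y <;> simp [hM, hxB, hyB, hxy, hfB y hyB]
        · by_cases hxy : adj x y
          · have hc : x ∉ B ∧ y ∉ B ∧ adj x y := ⟨hxB, hyB, hxy⟩
            rw [hM]
            simp only [Matrix.of_apply, if_pos hc, if_pos hxy]
            rw [div_eq_inv_mul]
          · rw [hM]
            simp [hxB, hyB, hxy]
    rw [Finset.sum_congr rfl fun x _ => hpt x]
    rfl
  have hnorm : ‖fE‖^2 = sgIp f f := by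
    rw [← real_inner_self_eq_norm_sq, hinner]
    unfold sgIp
    exact Finset.sum_congr rfl fun x _ => by rw [hfEapp]
  -- boundedness of the Rayleigh quotient
  have hbdd : BddAbove (Set.range fun x : { x : EuclideanSpace ℝ (Torus d N) // x ≠ 0 } =>
      RCLike.re (inner (𝕜 := ℝ) (T x) (x : EuclideanSpace ℝ (Torus d N)))
        / ‖(x : EuclideanSpace ℝ (Torus d N))‖ ^ 2) := by
    refine ⟨‖LinearMap.toContinuousLinearMap T‖, ?_⟩
    rintro q ⟨⟨x, hx⟩, rfl⟩
    dsimp only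
    have hx2 : (0:ℝ) < ‖x‖^2 := pow_pos (norm_pos_iff.mpr hx) 2
    rw [RCLike.re_to_real, div_le_iff₀ hx2]
    have h1 : inner (𝕜 := ℝ) (T x) x ≤ ‖T x‖ * ‖x‖ := real_inner_le_norm _ _
    have h2 : ‖T x‖ ≤ ‖LinearMap.toContinuousLinearMap T‖ * ‖x‖ :=
      (LinearMap.toContinuousLinearMap T).le_opNorm x
    nlinarith [norm_nonneg x, norm_nonneg (T x)]
  have hQf : sgIp f (sgP f) / sgIp f f ≤ μ := by
    have h := le_ciSup hbdd ⟨fE, hfEne⟩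
    dsimp only at h
    rw [RCLike.re_to_real, hray, hnorm] at h
    exact h
  -- positivity of μ
  have hipff : 0 < sgIp f f := sgIp_pos hfne
  have hμpos : 0 < μ := lt_of_lt_of_le (div_pos hpos hipff) hQf
  -- eigenvector
  obtain ⟨w, hw⟩ := hEig.exists_hasEigenvector
  have hww : T w = μ • w := (Module.End.mem_eigenspace_iff).mp hw.1
  set wf : Torus d N → ℝ := (WithLp.equiv 2 (Torus d N → ℝ)) w with hwf
  have heig : ∀ x : Torus d N, ∑ y, M x y * wf y = μ * wf x := by
    intro x
    rw [← hTapp, hww]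
    simp [hwf]
  have hwB : ∀ x ∈ B, wf x = 0 := by
    intro x hx
    have h0 : ∑ y, M x y * wf y = 0 := by
      apply Finset.sum_eq_zero
      intro y _
      rw [hM]
      simp [hx]
    have := heig x
    rw [h0] at this
    exact (mul_eq_zero.mp this.symm).resolve_left (ne_of_gt hμpos)
  refine ⟨μ, ⟨wf, ?_, hwB, ?_⟩, hQf⟩
  · intro h
    apply hw.2
    apply (WithLp.equiv 2 (Torus d N → ℝ)).injective
    show wf = (WithLp.equiv 2 (Torus d N → ℝ)) 0
    rw [h]
    rfl
  · intro x hx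
    rw [killedMul_eq_sum, ← heig x]
    refine Finset.sum_congr rfl fun y _ => ?_
    rw [hM]
    by_cases hyB : y ∈ B
    · by_cases hxy : adj x y <;> simp [hx, hyB, hxy, hwB y hyB]
    · by_cases hxy : adj x y
      · have hc1 : y ∉ B ∧ adj x y := ⟨hyB, hxy⟩
        have hc2 : x ∉ B ∧ y ∉ B ∧ adj x y := ⟨hx, hyB, hxy⟩
        simp only [Matrix.of_apply, if_pos hc1, if_pos hc2]
        rw [div_eq_inv_mul]
      · simp [hx, hyB, hxy]

end Aux7

section Aux9
set_option linter.unusedSectionVars false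
open Finset
variable {d N : ℕ} [NeZero N]

section Aux8
set_option linter.unusedSectionVars false
open Finset
variable {d N : ℕ} [NeZero N]

/-- the ramp test function -/
noncomputable def sgF (d N : ℕ) (R₁ mm : ℝ) (x : Torus d N) : ℝ :=
  min 1 (max 0 ((torusDist 0 x : ℝ) - R₁) / mm)

lemma sgF_nonneg (R₁ mm : ℝ) (hm : 0 < mm) (x : Torus d N) : 0 ≤ sgF d N R₁ mm x :=
  le_min (by norm_num) (by positivity)

lemma sgF_zero (R₁ mm : ℝ) (hm : 0 < mm) {x : Torus d N}
    (h : (torusDist 0 x : ℝ) ≤ R₁) : sgF d N R₁ mm x = 0 := by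
  unfold sgF
  rw [max_eq_left (by linarith), zero_div]
  exact min_eq_right (by norm_num)

lemma sgF_one (R₁ mm : ℝ) (hm : 0 < mm) (hR : 0 ≤ R₁) {x : Torus d N}
    (h : R₁ + mm ≤ (torusDist 0 x : ℝ)) : sgF d N R₁ mm x = 1 := by
  unfold sgF
  rw [max_eq_right (by linarith)]
  refine min_eq_left ?_
  rw [le_div_iff₀ hm, one_mul]
  linarith

lemma sgF_lip (R₁ mm : ℝ) (hm : 0 < mm) (x y : Torus d N)
    (hdist : |(torusDist 0 x : ℝ) - (torusDist 0 y : ℝ)| ≤ 1) :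
    |sgF d N R₁ mm x - sgF d N R₁ mm y| ≤ 1 / mm := by
  unfold sgF
  set a := max 0 ((torusDist 0 x : ℝ) - R₁) / mm
  set b := max 0 ((torusDist 0 y : ℝ) - R₁) / mm
  calc |min 1 a - min 1 b| ≤ max |1 - 1| |a - b| := abs_min_sub_min_le_max 1 a 1 b
    _ = |a - b| := by rw [sub_self, abs_zero]; exact max_eq_right (abs_nonneg _)
    _ ≤ 1 / mm := by
        have h1 : a - b = (max 0 ((torusDist 0 x : ℝ) - R₁)
            - max 0 ((torusDist 0 y : ℝ) - R₁)) / mm := by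
          rw [sub_div]
        rw [h1, abs_div, abs_of_pos hm, div_le_div_iff_of_pos_right hm]
        calc |max 0 ((torusDist 0 x : ℝ) - R₁) - max 0 ((torusDist 0 y : ℝ) - R₁)|
            = |max ((torusDist 0 x : ℝ) - R₁) 0 - max ((torusDist 0 y : ℝ) - R₁) 0| := by
              rw [max_comm, max_comm ((torusDist 0 y : ℝ) - R₁)]
          _ ≤ |((torusDist 0 x : ℝ) - R₁) - ((torusDist 0 y : ℝ) - R₁)| :=
              abs_max_sub_max_le_abs _ _ _
          _ ≤ 1 := by
              have : ((torusDist 0 x : ℝ) - R₁) - ((torusDist 0 y : ℝ) - R₁)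
                  = (torusDist 0 x : ℝ) - (torusDist 0 y : ℝ) := by ring
              rw [this]
              exact hdist

lemma adj_abs_dist (hN : 3 ≤ N) {x y : Torus d N} (h : adj x y) :
    |(torusDist 0 x : ℝ) - (torusDist 0 y : ℝ)| ≤ 1 := by
  have h1 := adj_dist_le hN h
  have h2 := adj_dist_le hN ((adj_comm x y).mp h)
  rw [abs_le]
  constructor
  · have : (torusDist 0 y : ℝ) ≤ (torusDist 0 x : ℝ) + 1 := by exact_mod_cast h1
    linarith
  · have : (torusDist 0 x : ℝ) ≤ (torusDist 0 y : ℝ) + 1 := by exact_mod_cast h2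
    linarith

lemma sgF_energy_bound (hd : 0 < d) (hN : 3 ≤ N) (R₁ mm : ℝ)
    (hm1 : 1 ≤ mm) (hR0 : 0 ≤ R₁) (hRm : R₁ ≤ mm) :
    sgE (sgF d N R₁ mm) ≤ 2 * (d:ℝ) * (7*mm)^d / mm^2 := by
  have hm : 0 < mm := by linarith
  set f := sgF d N R₁ mm with hf
  set K := ⌊R₁ + mm + 1⌋₊ with hK
  have hKle : (K:ℝ) ≤ R₁ + mm + 1 := Nat.floor_le (by linarith)
  have hKgt : R₁ + mm + 1 < (K:ℝ) + 1 := Nat.lt_floor_add_one _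
  have inner_bound : ∀ x : Torus d N, (∑ y, if adj x y then (f x - f y)^2 else 0)
      ≤ (if torusDist 0 x ≤ K then 2*(d:ℝ)*(1/mm^2) else 0) := by
    intro x
    by_cases hx : torusDist 0 x ≤ K
    · rw [if_pos hx]
      have : ∀ y : Torus d N, (if adj x y then (f x - f y)^2 else 0)
          ≤ (if adj x y then 1/mm^2 else 0) := by
        intro y
        by_cases hxy : adj x y
        · rw [if_pos hxy, if_pos hxy]
          have hlip := sgF_lip R₁ mm hm x y (adj_abs_dist hN hxy)
          calc (f x - f y)^2 = |f x - f y|^2 := (sq_abs _).symm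
            _ ≤ (1/mm)^2 := by
                apply pow_le_pow_left₀ (abs_nonneg _) hlip
            _ = 1/mm^2 := by rw [div_pow, one_pow]
        · rw [if_neg hxy, if_neg hxy]
      calc (∑ y, if adj x y then (f x - f y)^2 else 0)
          ≤ ∑ y, (if adj x y then 1/mm^2 else 0) := Finset.sum_le_sum fun y _ => this y
        _ = 2*(d:ℝ)*(1/mm^2) := sum_adj_const hN x _
    · rw [if_neg hx]
      apply le_of_eq
      apply Finset.sum_eq_zero
      intro y _
      by_cases hxy : adj x y
      · rw [if_pos hxy]
        have hdx : R₁ + mm ≤ (torusDist 0 x : ℝ) := by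
          have : (K:ℝ) + 1 ≤ (torusDist 0 x : ℝ) := by
            have : K + 1 ≤ torusDist 0 x := by omega
            exact_mod_cast this
          linarith
        have hdy : R₁ + mm ≤ (torusDist 0 y : ℝ) := by
          have h2 := adj_dist_le hN ((adj_comm x y).mp hxy)
          have : (torusDist 0 x : ℝ) ≤ (torusDist 0 y : ℝ) + 1 := by exact_mod_cast h2
          have hKx : (K:ℝ) + 1 ≤ (torusDist 0 x : ℝ) := by
            have h3 : K + 1 ≤ torusDist 0 x := by omega
            exact_mod_cast h3
          linarith
        rw [hf, sgF_one R₁ mm hm hR0 hdx, sgF_one R₁ mm hm hR0 hdy]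
        ring
      · rw [if_neg hxy]
  calc sgE f ≤ ∑ x : Torus d N, (if torusDist 0 x ≤ K then 2*(d:ℝ)*(1/mm^2) else 0) :=
      Finset.sum_le_sum fun x _ => inner_bound x
    _ = ((Finset.univ.filter fun x : Torus d N => torusDist 0 x ≤ K).card : ℝ)
        * (2*(d:ℝ)*(1/mm^2)) := by
        rw [← Finset.sum_filter, Finset.sum_const, nsmul_eq_mul]
    _ ≤ ((2*K+1:ℕ)^d : ℝ) * (2*(d:ℝ)*(1/mm^2)) := by
        apply mul_le_mul_of_nonneg_right _ (by positivity)
        exact_mod_cast card_torus_ball (d := d) (N := N) K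
    _ ≤ (7*mm)^d * (2*(d:ℝ)*(1/mm^2)) := by
        apply mul_le_mul_of_nonneg_right _ (by positivity)
        have h1 : ((2*K+1:ℕ) : ℝ) ≤ 7*mm := by
          push_cast
          linarith
        calc ((2*K+1:ℕ)^d : ℝ) = (((2*K+1:ℕ) : ℝ))^d := by push_cast; ring
          _ ≤ (7*mm)^d := pow_le_pow_left₀ (by positivity) h1 d
    _ = 2 * (d:ℝ) * (7*mm)^d / mm^2 := by ring

lemma sgF_ip_bound (hd : 0 < d) (hN : 3 ≤ N) (R₁ mm : ℝ)
    (hm1 : 1 ≤ mm) (hR0 : 0 ≤ R₁) (hRm : R₁ ≤ mm) :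
    (N:ℝ)^d - (7*mm)^d ≤ sgIp (sgF d N R₁ mm) (sgF d N R₁ mm) := by
  have hm : 0 < mm := by linarith
  set f := sgF d N R₁ mm with hf
  set q := ⌊R₁ + mm⌋₊ with hq
  have hqle : (q:ℝ) ≤ R₁ + mm := Nat.floor_le (by linarith)
  have hqgt : R₁ + mm < (q:ℝ) + 1 := Nat.lt_floor_add_one _
  have hpt : ∀ x : Torus d N, (if ¬ (torusDist 0 x ≤ q) then (1:ℝ) else 0) ≤ f x * f x := by
    intro x
    by_cases hx : torusDist 0 x ≤ q
    · rw [if_neg (not_not_intro hx)]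
      exact mul_self_nonneg _
    · rw [if_pos hx]
      have hdx : R₁ + mm ≤ (torusDist 0 x : ℝ) := by
        have : q + 1 ≤ torusDist 0 x := by omega
        have h' : (q:ℝ) + 1 ≤ (torusDist 0 x : ℝ) := by exact_mod_cast this
        linarith
      rw [hf, sgF_one R₁ mm hm hR0 hdx]
      norm_num
  have hcount := card_torus_far (d := d) (N := N) q
  have h1 : ((Finset.univ.filter fun x : Torus d N => ¬ (torusDist 0 x ≤ q)).card : ℝ)
      ≤ sgIp f f := by
    unfold sgIp
    calc ((Finset.univ.filter fun x : Torus d N => ¬ (torusDist 0 x ≤ q)).card : ℝ)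
        = ∑ x : Torus d N, (if ¬ (torusDist 0 x ≤ q) then (1:ℝ) else 0) := by
          rw [← Finset.sum_filter, Finset.sum_const, nsmul_eq_mul, mul_one]
      _ ≤ ∑ x : Torus d N, f x * f x := Finset.sum_le_sum fun x _ => hpt x
  have h2 : ((2*q+1:ℕ)^d : ℝ) ≤ (7*mm)^d := by
    have hq1 : ((2*q+1:ℕ) : ℝ) ≤ 7*mm := by push_cast; linarith
    calc ((2*q+1:ℕ)^d : ℝ) = (((2*q+1:ℕ) : ℝ))^d := by push_cast; ring
      _ ≤ (7*mm)^d := pow_le_pow_left₀ (by positivity) hq1 d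
  have h3 : (N:ℝ)^d ≤ ((Finset.univ.filter fun x : Torus d N => ¬ (torusDist 0 x ≤ q)).card : ℝ)
      + ((2*q+1:ℕ)^d : ℝ) := by
    have : ((N^d : ℕ) : ℝ) ≤ ((Finset.univ.filter fun x : Torus d N => ¬ (torusDist 0 x ≤ q)).card
        + (2*q+1)^d : ℕ) := by exact_mod_cast hcount
    push_cast at this ⊢
    linarith
  linarith

end Aux8

set_option maxHeartbeats 1000000 in
lemma second_gap (hd : 0 < d) (hN : 3 ≤ N) (B : Set (Torus d N))
    (v₁ v : Torus d N → ℝ) (l₁ l₂ : ℝ)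
    (hv₁ne : v₁ ≠ 0) (hv₁nn : ∀ x, 0 ≤ v₁ x) (hv₁B : ∀ x ∈ B, v₁ x = 0)
    (hv₁E : ∀ x, x ∉ B → killedMul d N B v₁ x = l₁ * v₁ x)
    (hvne : v ≠ 0) (hvB : ∀ x ∈ B, v x = 0)
    (hvO : (∑ x, v x * v₁ x) = 0)
    (hvE : ∀ x, x ∉ B → killedMul d N B v x = l₂ * v x)
    (hl₁ : 2*(d:ℝ)^2*(N:ℝ)^2*(1 - l₁) ≤ 1) :
    1 ≤ (d:ℝ)^2*(N:ℝ)^2*(1 - l₂) := by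
  classical
  set Sv := ∑ x, v x with hSv
  set S1 := ∑ x, v₁ x with hS1
  have hS1pos : 0 < S1 := by
    rcases Function.ne_iff.mp hv₁ne with ⟨x, hx⟩
    refine Finset.sum_pos' (fun y _ => hv₁nn y) ⟨x, Finset.mem_univ x, ?_⟩
    exact lt_of_le_of_ne (hv₁nn x) (Ne.symm (by simpa using hx))
  set u : Torus d N → ℝ := fun x => Sv * v₁ x - S1 * v x with hu
  have hO' : ∑ x : Torus d N, v₁ x * v x = 0 := by
    rw [← hvO]
    exact Finset.sum_congr rfl fun x _ => mul_comm _ _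
  have hu0 : ∑ x, u x = 0 := by
    rw [hu]
    rw [Finset.sum_sub_distrib, ← Finset.mul_sum, ← Finset.mul_sum, ← hSv, ← hS1]
    ring
  have hipuu : sgIp u u = Sv^2 * sgIp v₁ v₁ + S1^2 * sgIp v v := by
    unfold sgIp
    have hx : ∀ x : Torus d N, u x * u x
        = Sv^2*(v₁ x * v₁ x) - (2*Sv*S1)*(v x * v₁ x) + S1^2*(v x * v x) := by
      intro x; rw [hu]; ring
    rw [Finset.sum_congr rfl fun x _ => hx x, Finset.sum_add_distrib, Finset.sum_sub_distrib,
      ← Finset.mul_sum, ← Finset.mul_sum, ← Finset.mul_sum, hvO]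
    ring
  have hPu : sgIp u (sgP u) = Sv^2 * l₁ * sgIp v₁ v₁ + S1^2 * l₂ * sgIp v v := by
    have hkey : ∀ x : Torus d N, u x * sgP u x
        = Sv*l₁*(u x * v₁ x) - S1*l₂*(u x * v x) := by
      intro x
      have hPlin : sgP u x = Sv * sgP v₁ x - S1 * sgP v x := sgP_lin Sv S1 v₁ v x
      by_cases hxB : x ∈ B
      · have hux : u x = 0 := by rw [hu]; simp only [hv₁B x hxB, hvB x hxB]; ring
        rw [hux]; ring
      · rw [hPlin, ← killedMul_eq_sgP B v₁ hv₁B x, ← killedMul_eq_sgP B v hvB x,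
          hv₁E x hxB, hvE x hxB]
        ring
    have hshow : sgIp u (sgP u) = ∑ x : Torus d N, u x * sgP u x := rfl
    rw [hshow]
    rw [Finset.sum_congr rfl fun x _ => hkey x, Finset.sum_sub_distrib,
      ← Finset.mul_sum, ← Finset.mul_sum]
    have huv₁ : ∑ x : Torus d N, u x * v₁ x = Sv * sgIp v₁ v₁ := by
      have hx : ∀ x : Torus d N, u x * v₁ x
          = Sv*(v₁ x * v₁ x) - S1*(v x * v₁ x) := fun x => by rw [hu]; ring
      rw [Finset.sum_congr rfl fun x _ => hx x, Finset.sum_sub_distrib,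
        ← Finset.mul_sum, ← Finset.mul_sum, hvO]
      unfold sgIp; ring
    have huv : ∑ x : Torus d N, u x * v x = - (S1 * sgIp v v) := by
      have hx : ∀ x : Torus d N, u x * v x
          = Sv*(v₁ x * v x) - S1*(v x * v x) := fun x => by rw [hu]; ring
      rw [Finset.sum_congr rfl fun x _ => hx x, Finset.sum_sub_distrib,
        ← Finset.mul_sum, ← Finset.mul_sum, hO']
      unfold sgIp; ring
    rw [huv₁, huv]
    ring
  have hEu := sgE_eq hd hN u
  have hpoin := poincare hd hN u hu0
  rw [hEu, hipuu, hPu] at hpoin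
  set A := sgIp v₁ v₁ with hA
  set B2 := sgIp v v with hB2
  have hA0 : 0 ≤ A := sgIp_nonneg v₁
  have hB2pos : 0 < B2 := sgIp_pos hvne
  have hP0 : 0 ≤ Sv^2 * A := mul_nonneg (sq_nonneg _) hA0
  have hQpos : 0 < S1^2 * B2 := mul_pos (pow_pos hS1pos 2) hB2pos
  have h1 : Sv^2*A + S1^2*B2
      ≤ ((d:ℝ)^2*(N:ℝ)^2) * ((Sv^2*A)*(1-l₁) + (S1^2*B2)*(1-l₂)) := by
    linarith [hpoin]
  have hfact : (0:ℝ) ≤ 1 - 2*((d:ℝ)^2*(N:ℝ)^2)*(1-l₁) := by nlinarith [hl₁]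
  have h2 : ((d:ℝ)^2*(N:ℝ)^2) * ((Sv^2*A)*(1-l₁)) ≤ (Sv^2*A)/2 := by
    nlinarith [mul_nonneg hP0 hfact]
  have h3 : S1^2*B2 ≤ ((d:ℝ)^2*(N:ℝ)^2) * ((S1^2*B2)*(1-l₂)) := by
    nlinarith [h1, h2, hP0]
  by_contra hcon
  push_neg at hcon
  have hmul := mul_lt_mul_of_pos_left hcon hQpos
  nlinarith [h3, hmul]

end Aux9

section Aux10
set_option linter.unusedSectionVars false
variable {d N : ℕ} [NeZero N]
lemma sgE_nonneg (u : Torus d N → ℝ) : 0 ≤ sgE u :=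
  Finset.sum_nonneg fun x _ => Finset.sum_nonneg fun y _ => by
    by_cases h : adj x y <;> simp [h] <;> positivity
end Aux10




set_option maxHeartbeats 8000000 in
/-- **Lemma (spectral gap of the killed walk).**
With `B = B(0, N^{1−ε/2})`, if `λ^B_1 ≥ λ^B_2` are the two largest eigenvalues
of `P^B`, then `λ^B_1 − λ^B_2 ≥ c N^{−2}` for all large `N`. -/
theorem killed_walk_spectral_gap
    (d : ℕ) (hd : 3 ≤ d) (ε : ℝ) (hε : 0 < ε ∧ ε < 1) :
    ∃ c : ℝ, 0 < c ∧ ∃ N₀ : ℕ, ∀ N : ℕ, N₀ ≤ N →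
      ∀ l₁ l₂ : ℝ, ∀ v₁ : Torus d N → ℝ,
        IsKilledEigenvalue d N (torusBall (0 : Torus d N) ((N : ℝ) ^ (1 - ε / 2))) l₁ →
        (∀ l' : ℝ,
          IsKilledEigenvalue d N (torusBall (0 : Torus d N) ((N : ℝ) ^ (1 - ε / 2))) l' →
          l' ≤ l₁) →
        v₁ ≠ 0 → (∀ x, 0 ≤ v₁ x) →
        (∀ x ∈ torusBall (0 : Torus d N) ((N : ℝ) ^ (1 - ε / 2)), v₁ x = 0) →
        (∀ x, x ∉ torusBall (0 : Torus d N) ((N : ℝ) ^ (1 - ε / 2)) →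
          killedMul d N (torusBall (0 : Torus d N) ((N : ℝ) ^ (1 - ε / 2))) v₁ x =
            l₁ * v₁ x) →
        IsSecondEigenvalueGiven d N (torusBall (0 : Torus d N) ((N : ℝ) ^ (1 - ε / 2))) v₁ l₂ →
        c * (N : ℝ) ^ (-(2 : ℝ)) ≤ l₁ - l₂ := by
  obtain ⟨hε0, hε1⟩ := hε
  have hd0 : 0 < d := by omega
  have hd2 : (2:ℝ) < (d:ℝ) := by exact_mod_cast (by omega : 2 < d)
  have hβ : (0:ℝ) < ((d:ℝ) - 2) * (ε/4) := by
    apply mul_pos <;> linarith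
  have htend : Filter.Tendsto (fun n : ℕ => ((n:ℝ))^(((d:ℝ) - 2) * (ε/4)))
      Filter.atTop Filter.atTop :=
    (tendsto_rpow_atTop hβ).comp tendsto_natCast_atTop_atTop
  obtain ⟨N₀, hN₀⟩ := Filter.eventually_atTop.mp
    ((htend.eventually_ge_atTop (4*(d:ℝ)^2*7^d)).and (Filter.eventually_ge_atTop 3))
  refine ⟨1/(2*(d:ℝ)^2), by positivity, N₀, ?_⟩
  intro N hNN l₁ l₂ v₁ _hl₁eig hl₁max hv₁ne hv₁nn hv₁B hv₁E hsec
  obtain ⟨hstar, hN3⟩ := hN₀ N hNN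
  haveI : NeZero N := ⟨by omega⟩
  set R₁ : ℝ := (N:ℝ)^(1 - ε/2) with hR₁def
  set mm : ℝ := (N:ℝ)^(1 - ε/4) with hmmdef
  have hN1 : (1:ℝ) ≤ (N:ℝ) := by exact_mod_cast (by omega : 1 ≤ N)
  have hNpos : (0:ℝ) < (N:ℝ) := by linarith
  have hNR3 : (3:ℝ) ≤ (N:ℝ) := by exact_mod_cast hN3
  have hmm1 : 1 ≤ mm := Real.one_le_rpow hN1 (by linarith)
  have hmm0 : 0 < mm := by linarith
  have hR₁0 : 0 ≤ R₁ := Real.rpow_nonneg hNpos.le _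
  have hRm : R₁ ≤ mm := Real.rpow_le_rpow_of_exponent_le hN1 (by linarith)
  -- power bookkeeping
  have hcast2 : ((d-2:ℕ):ℝ) = (d:ℝ) - 2 := by
    rw [Nat.cast_sub (by omega : 2 ≤ d)]
    norm_num
  have hmmd2 : mm^((d-2:ℕ)) = (N:ℝ)^((1-ε/4)*((d:ℝ)-2)) := by
    rw [← Real.rpow_natCast mm (d-2), hmmdef, ← Real.rpow_mul hNpos.le]
    congr 1
    rw [hcast2]
  have hNd2 : (N:ℝ)^((d-2:ℕ))
      = (N:ℝ)^((1-ε/4)*((d:ℝ)-2)) * (N:ℝ)^(((d:ℝ)-2)*(ε/4)) := by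
    rw [← Real.rpow_natCast (N:ℝ) (d-2), hcast2, ← Real.rpow_add hNpos]
    congr 1
    ring
  have hkey1 : 2*(d:ℝ)^2*7^d*mm^((d-2:ℕ)) ≤ (N:ℝ)^((d-2:ℕ)) := by
    rw [hNd2, hmmd2]
    have h7 : 2*(d:ℝ)^2*7^d ≤ (N:ℝ)^(((d:ℝ)-2)*(ε/4)) := by
      have h77 : (0:ℝ) < 7^d := pow_pos (by norm_num) d
      nlinarith [hstar]
    calc 2*(d:ℝ)^2*7^d * (N:ℝ)^((1-ε/4)*((d:ℝ)-2))
        ≤ (N:ℝ)^(((d:ℝ)-2)*(ε/4)) * (N:ℝ)^((1-ε/4)*((d:ℝ)-2)) :=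
          mul_le_mul_of_nonneg_right h7 (Real.rpow_nonneg hNpos.le _)
      _ = (N:ℝ)^((1-ε/4)*((d:ℝ)-2)) * (N:ℝ)^(((d:ℝ)-2)*(ε/4)) := mul_comm _ _
  have hmmd : mm^(d:ℕ) = (N:ℝ)^((1-ε/4)*(d:ℝ)) := by
    rw [← Real.rpow_natCast mm d, hmmdef, ← Real.rpow_mul hNpos.le]
  have hNdsplit : (N:ℝ)^(d:ℕ) = (N:ℝ)^((1-ε/4)*(d:ℝ)) * (N:ℝ)^((ε/4)*(d:ℝ)) := by
    rw [← Real.rpow_natCast (N:ℝ) d, ← Real.rpow_add hNpos]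
    congr 1
    ring
  have hkey2 : (7*mm)^d ≤ (N:ℝ)^(d:ℕ) / 2 := by
    have hmono : (N:ℝ)^(((d:ℝ)-2)*(ε/4)) ≤ (N:ℝ)^((ε/4)*(d:ℝ)) :=
      Real.rpow_le_rpow_of_exponent_le hN1 (by nlinarith)
    have h77 : (0:ℝ) < 7^d := pow_pos (by norm_num) d
    have h16 : (16:ℝ)*7^d ≤ 4*(d:ℝ)^2*7^d :=
      mul_le_mul_of_nonneg_right (by nlinarith [hd2] : (16:ℝ) ≤ 4*(d:ℝ)^2) h77.le
    have h27 : 2*(7:ℝ)^d ≤ (N:ℝ)^((ε/4)*(d:ℝ)) := by linarith [hstar, hmono, h77, h16]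
    rw [mul_pow, hmmd, hNdsplit, le_div_iff₀ (by norm_num : (0:ℝ) < 2)]
    have hXpos : (0:ℝ) ≤ (N:ℝ)^((1-ε/4)*(d:ℝ)) := Real.rpow_nonneg hNpos.le _
    nlinarith [mul_le_mul_of_nonneg_left h27 hXpos]
  -- the test function
  set f := sgF d N R₁ mm with hfdef
  have hEbound := sgF_energy_bound hd0 hN3 R₁ mm hmm1 hR₁0 hRm
  have hIbound := sgF_ip_bound hd0 hN3 R₁ mm hmm1 hR₁0 hRm
  have hipf_lb : (N:ℝ)^(d:ℕ)/2 ≤ sgIp f f := by linarith [hkey2, hIbound]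
  have hipf_pos : 0 < sgIp f f := lt_of_lt_of_le (by positivity) hipf_lb
  have hfne : f ≠ 0 := by
    intro h
    rw [h] at hipf_pos
    have h0 : sgIp (0 : Torus d N → ℝ) 0 = 0 := by unfold sgIp; simp
    rw [h0] at hipf_pos
    exact lt_irrefl 0 hipf_pos
  have hfB : ∀ x ∈ torusBall (0 : Torus d N) R₁, f x = 0 := by
    intro x hx
    exact sgF_zero R₁ mm hmm0 hx
  have hDpos : (0:ℝ) < (d:ℝ) := by exact_mod_cast hd0
  have hEf_nonneg : 0 ≤ sgE f := sgE_nonneg f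
  have hEN : sgE f * ((d:ℝ) * (N:ℝ)^2) ≤ 2 * sgIp f f := by
    have hmm2 : mm^(d:ℕ) = mm^((d-2:ℕ)) * mm^2 := by
      rw [← pow_add]
      congr 1
      omega
    have hEE : sgE f ≤ 2*(d:ℝ)*7^d*mm^((d-2:ℕ)) := by
      calc sgE f ≤ 2*(d:ℝ)*(7*mm)^d / mm^2 := hEbound
        _ = 2*(d:ℝ)*7^d*(mm^(d:ℕ) / mm^2) := by rw [mul_pow]; ring
        _ = 2*(d:ℝ)*7^d*mm^((d-2:ℕ)) := by
            rw [hmm2]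
            field_simp
    have hpowrel : (N:ℝ)^((d-2:ℕ)) * (N:ℝ)^2 = (N:ℝ)^(d:ℕ) := by
      rw [← pow_add]
      congr 1
      omega
    have h1 : sgE f * (d:ℝ) ≤ (N:ℝ)^((d-2:ℕ)) := by
      have := mul_le_mul_of_nonneg_right hEE hDpos.le
      nlinarith [hkey1]
    have h2 : sgE f * (d:ℝ) * (N:ℝ)^2 ≤ (N:ℝ)^(d:ℕ) := by
      rw [← hpowrel]
      exact mul_le_mul_of_nonneg_right h1 (by positivity)
    calc sgE f * ((d:ℝ) * (N:ℝ)^2) = sgE f * (d:ℝ) * (N:ℝ)^2 := by ring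
      _ ≤ (N:ℝ)^(d:ℕ) := h2
      _ ≤ 2 * sgIp f f := by linarith [hipf_lb]
  have hsgEf := sgE_eq hd0 hN3 f
  have hip_eq : sgIp f (sgP f) = sgIp f f - sgE f / (4*(d:ℝ)) := by
    field_simp
    linarith [hsgEf]
  have hdn : (1:ℝ) ≤ (d:ℝ)*(N:ℝ)^2 := by nlinarith [hd2, hNR3]
  have hsmall' : sgE f ≤ 2*(d:ℝ)*sgIp f f := by
    nlinarith [hEN, hEf_nonneg, hipf_pos.le, hdn, hd2]
  have hsmall : sgE f / (4*(d:ℝ)) ≤ sgIp f f / 2 := by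
    rw [div_le_div_iff₀ (by positivity) (by norm_num)]
    nlinarith [hsmall']
  have hpos : 0 < sgIp f (sgP f) := by
    rw [hip_eq]
    linarith [hipf_pos, hsmall]
  obtain ⟨lmax, hlmaxE, hlmaxQ⟩ :=
    exists_top_eigen hd0 (torusBall (0 : Torus d N) R₁) f hfB hfne hpos
  have hlle : lmax ≤ l₁ := hl₁max lmax hlmaxE
  have hEdiv : sgE f / (4*(d:ℝ)) ≤ sgIp f f / (2*(d:ℝ)^2*(N:ℝ)^2) := by
    rw [div_le_div_iff₀ (by positivity) (by positivity)]
    have := mul_le_mul_of_nonneg_right hEN (by positivity : (0:ℝ) ≤ 2*(d:ℝ))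
    nlinarith [this]
  have hl₁lb : 2*(d:ℝ)^2*(N:ℝ)^2*(1 - l₁) ≤ 1 := by
    have h1 : sgIp f (sgP f) / sgIp f f ≤ l₁ := le_trans hlmaxQ hlle
    have h2 : 1 - 1/(2*(d:ℝ)^2*(N:ℝ)^2) ≤ sgIp f (sgP f) / sgIp f f := by
      rw [le_div_iff₀ hipf_pos, hip_eq]
      have h3 : sgE f / (4*(d:ℝ)) ≤ sgIp f f * (1/(2*(d:ℝ)^2*(N:ℝ)^2)) := by
        rw [mul_one_div]
        exact hEdiv
      nlinarith [h3]
    have h4 : 1 - 1/(2*(d:ℝ)^2*(N:ℝ)^2) ≤ l₁ := le_trans h2 h1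
    have h5 : (0:ℝ) < 2*(d:ℝ)^2*(N:ℝ)^2 := by positivity
    have h6 : (2*(d:ℝ)^2*(N:ℝ)^2) * (1/(2*(d:ℝ)^2*(N:ℝ)^2)) = 1 := by field_simp
    have h7 : 1 - l₁ ≤ 1/(2*(d:ℝ)^2*(N:ℝ)^2) := by linarith [h4]
    calc 2*(d:ℝ)^2*(N:ℝ)^2*(1 - l₁) ≤ (2*(d:ℝ)^2*(N:ℝ)^2) * (1/(2*(d:ℝ)^2*(N:ℝ)^2)) :=
        mul_le_mul_of_nonneg_left h7 h5.le
      _ = 1 := h6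
  -- second eigenvalue
  obtain ⟨⟨v, hvne, hvB, hvO, hvE⟩, -⟩ := hsec
  rw [finsum_eq_sum_of_fintype] at hvO
  have hgap := second_gap hd0 hN3 (torusBall (0 : Torus d N) R₁) v₁ v l₁ l₂
    hv₁ne hv₁nn hv₁B hv₁E hvne hvB hvO hvE hl₁lb
  -- conclude
  have hrw : (N:ℝ)^(-(2:ℝ)) = ((N:ℝ)^(2:ℕ))⁻¹ := by
    rw [Real.rpow_neg hNpos.le]
    congr 1
    rw [show ((2:ℝ)) = ((2:ℕ):ℝ) by norm_num, Real.rpow_natCast]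
  rw [hrw]
  have hpos2 : (0:ℝ) < 2*(d:ℝ)^2*(N:ℝ)^2 := by positivity
  have hfold : (1/(2*(d:ℝ)^2)) * ((N:ℝ)^(2:ℕ))⁻¹ = 1/(2*(d:ℝ)^2*(N:ℝ)^2) := by
    field_simp
  rw [hfold, div_le_iff₀ hpos2]
  linarith [hl₁lb, hgap]

end Frag
end
end
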